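/- arXiv:1703.03698 — 8 statements merged into one kernel-verified Lean document; each statement's English description precedes it below -/
import Mathlib

section
/- Let R be a discrete valuation ring with uniformizer π, K its fraction field, and A a flat R-algebra (i.e. A has no π-torsion). If A has reduced special fiber, i.e. A/πA is a reduced ring, then A is integrally closed in A ⊗_R K in the following sense: any element α ∈ A ⊗_R K that satisfies a monic polynomial equation αᵐ + a_{m-1}α^{m-1} + ... + a₀ = 0 with all a_i ∈ A already lies in (the image of) A. -/
/-- let `R` be a discrete valuation ring with uniformizer `π` and `A` a
π-torsion-free `R`-algebra whose special fiber `A/πA` is reduced, in which every nonzero element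
can be written as `π^n · a` with `a ∉ πA`.  Then `A` is integrally closed in
`A ⊗_R K = A[π⁻¹]`: every element of the localization that is integral over `A` comes from `A`. -/
theorem integrally_closed_of_reduced_special_fiber
    (R A : Type*) [CommRing R] [IsDomain R] [IsDiscreteValuationRing R]
    [CommRing A] [Algebra R A]
    (π : R) (hπ : Irreducible π)
    (hflat : ∀ x : A, algebraMap R A π * x = 0 → x = 0)
    (hrep : ∀ x : A, x ≠ 0 →
      ∃ (a : A) (n : ℕ), (¬ ∃ b : A, a = algebraMap R A π * b) ∧
        x = algebraMap R A π ^ n * a)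
    (hred : IsReduced (A ⧸ Ideal.span {algebraMap R A π}))
    (α : Localization.Away (algebraMap R A π)) (hint : IsIntegral A α) :
    ∃ a : A, algebraMap A (Localization.Away (algebraMap R A π)) a = α := by
  revert hint
  revert α
  set p : A := algebraMap R A π with hp
  set L := Localization.Away p with hL
  set f : A →+* L := algebraMap A L with hf
  intro α hint
  -- p is a nonzerodivisor, so localization is injective
  have hpnzd : p ∈ nonZeroDivisors A := by
    rw [mem_nonZeroDivisors_iff_right]
    intro x hx
    exact hflat x (by rwa [mul_comm])
  have hle : Submonoid.powers p ≤ nonZeroDivisors A := by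
    rw [Submonoid.powers_le]; exact hpnzd
  have inj : Function.Injective f := IsLocalization.injective L hle
  -- p is invertible in L
  have hpu : IsUnit (f p) :=
    IsLocalization.map_units L (⟨p, Submonoid.mem_powers p⟩ : Submonoid.powers p)
  -- core claim: if α * (f p)^m = f c with m ≥ 1 and c not divisible by p, contradiction
  have core : ∀ (m : ℕ) (c : A), 1 ≤ m → (¬ ∃ b : A, c = p * b) →
      α * (f p) ^ m = f c → False := by
    intro m c hm hc hαc
    obtain ⟨P, hPmonic, hPα⟩ := hint
    have hPα' : Polynomial.aeval α P = 0 := by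
      rw [Polynomial.aeval_def]; exact hPα
    have h1 : Polynomial.aeval (algebraMap A L (p ^ m) * α) (P.scaleRoots (p ^ m)) = 0 :=
      Polynomial.scaleRoots_aeval_eq_zero hPα'
    have h2 : algebraMap A L (p ^ m) * α = f c := by
      rw [map_pow]; rw [mul_comm]; exact hαc
    rw [h2] at h1
    set Q := P.scaleRoots (p ^ m) with hQ
    have h3 : f (Q.eval c) = 0 := by
      have := Polynomial.eval₂_at_apply (p := Q) f c
      rw [Polynomial.aeval_def] at h1
      rw [this] at h1
      exact h1
    have h4 : Q.eval c = 0 := inj (by rw [h3, map_zero])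
    set d := P.natDegree with hd
    have hQd : Q.natDegree = d := Polynomial.natDegree_scaleRoots P (p ^ m)
    have hQtop : Q.coeff d = 1 := by
      have := Polynomial.coeff_scaleRoots_natDegree P (p ^ m)
      rwa [hPmonic.leadingCoeff] at this
    have h5 : Q.eval c = (∑ i ∈ Finset.range d, Q.coeff i * c ^ i) + c ^ d := by
      rw [Polynomial.eval_eq_sum_range, hQd, Finset.sum_range_succ, hQtop, one_mul]
    have h6 : c ^ d ∈ Ideal.span {p} := by
      have h7 : c ^ d = -(∑ i ∈ Finset.range d, Q.coeff i * c ^ i) := by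
        rw [h5] at h4; linear_combination h4
      rw [h7]
      refine neg_mem (Ideal.sum_mem _ fun i hi => ?_)
      have hid : i < d := Finset.mem_range.mp hi
      have hdvd : p ∣ Q.coeff i := by
        rw [hQ, Polynomial.coeff_scaleRoots]
        refine Dvd.dvd.mul_left ?_ _
        calc p ∣ p ^ m := dvd_pow_self p (by omega)
          _ ∣ (p ^ m) ^ (P.natDegree - i) := dvd_pow_self _ (by omega)
      exact Ideal.mul_mem_right _ _ (Ideal.mem_span_singleton.mpr hdvd)
    -- pass to the quotient
    have h8 : (Ideal.Quotient.mk (Ideal.span {p}) c) ^ d = 0 := by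
      rw [← map_pow, Ideal.Quotient.eq_zero_iff_mem]; exact h6
    have h9 : (Ideal.Quotient.mk (Ideal.span {p}) c) = 0 :=
      hred.eq_zero _ ⟨d, h8⟩
    rw [Ideal.Quotient.eq_zero_iff_mem, Ideal.mem_span_singleton] at h9
    obtain ⟨b, hb⟩ := h9
    exact hc ⟨b, hb⟩
  -- write α = a / p^n
  obtain ⟨⟨a, s⟩, hs⟩ := IsLocalization.surj (Submonoid.powers p) α
  obtain ⟨n, hn⟩ := s.2
  have hn' : p ^ n = (s : A) := hn
  have hs' : α * (f p) ^ n = f a := by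
    rw [← map_pow, hn']; exact hs
  clear hs hn
  by_cases ha : a = 0
  · refine ⟨0, ?_⟩
    rw [map_zero]
    subst ha
    rw [map_zero] at hs'
    have h0 : α * (f p) ^ n = 0 * (f p) ^ n := by rw [zero_mul]; exact hs'
    exact ((hpu.pow n).mul_right_cancel h0).symm
  · obtain ⟨c, k, hc, hac⟩ := hrep a ha
    have hfa : f a = (f p) ^ k * f c := by rw [hac, map_mul, map_pow]
    rcases le_or_gt n k with h | h
    · refine ⟨p ^ (k - n) * c, ?_⟩
      have heq : f (p ^ (k - n) * c) * (f p) ^ n = α * (f p) ^ n := by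
        rw [hs', hfa, map_mul, map_pow, mul_right_comm, ← pow_add,
          Nat.sub_add_cancel h]
      exact (hpu.pow n).mul_right_cancel heq
    · exfalso
      refine core (n - k) c (by omega) hc ?_
      have heq : α * (f p) ^ (n - k) * (f p) ^ k = f c * (f p) ^ k := by
        rw [mul_assoc, ← pow_add, Nat.sub_add_cancel h.le, hs', hfa]; ring
      exact (hpu.pow k).mul_right_cancel heq
end

section
/- Let R be a complete discrete valuation ring with uniformizer π, let e be a positive integer, and let A = R{X,Y}/(XY − π^e) be the algebra of bounded functions on a closed annulus (elements f = Σ_{i≥0} a_i X^i + Σ_{i>0} b_i Y^i with a_i, b_i ∈ R tending to 0). Suppose f ∈ A satisfies f(1) := Σ_{i≥0} a_i + Σ_{i>0} b_i π^{ei} = 0. Then there exists g ∈ A such that Y·f = (Y − π^e)·g. Explicitly, g = Σ_{i≥0} c_i X^i + Σ_{i>0} d_i Y^i with c_i = −Σ_{k≥i+1} a_k and d_i = Σ_{k≥i} b_k π^{e(k−i)}. -/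
noncomputable section

/-- Weierstrass division step on a closed annulus.  Let `R` be a complete discrete
valuation ring with uniformizer `π`, and `f = Σ_{i≥0} a_i X^i + Σ_{i>0} b_i Y^i` a bounded
function on the closed annulus of modulus `e` (coefficients tending to `0` π-adically), with
`f(1) = Σ_{i≥0} a_i + Σ_{i>0} b_i π^{ei} = 0`.  Then `Y·f = (Y − π^e)·g` in
`A = R{X,Y}/(XY − π^e)`, where `g = Σ_{i≥0} c_i X^i + Σ_{i>0} d_i Y^i` with
`c_i = −Σ_{k≥i+1} a_k` and `d_i = Σ_{k≥i} b_k π^{e(k−i)}`. -/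
theorem weierstrass_division_step
    (R : Type*) [CommRing R] [IsDomain R] [IsDiscreteValuationRing R]
    [TopologicalSpace R] [IsTopologicalRing R] [T2Space R]
    (π : R) (hπ : Irreducible π) (e : ℕ) (he : 0 < e)
    (a b : ℕ → R) (hb0 : b 0 = 0)
    -- the coefficients tend to zero π-adically (restricted power series condition)
    (hta : ∀ n : ℕ, {i : ℕ | ¬ π ^ n ∣ a i}.Finite)
    (htb : ∀ n : ℕ, {i : ℕ | ¬ π ^ n ∣ b i}.Finite)
    -- the tails of the relevant series are summable
    (hSa : ∀ i : ℕ, Summable fun k : ℕ => a (k + i))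
    (hSb : ∀ i : ℕ, Summable fun k : ℕ => b (k + i) * π ^ (e * k))
    -- the hypothesis `f(1) = Σ_{i≥0} a_i + Σ_{i>0} b_i π^{e i} = 0`
    (hf1 : HasSum (fun i : ℕ => a i + b i * π ^ (e * i)) 0)
    -- `f = Σ a_i X^i + Σ b_i Y^i` and `g = Σ c_i X^i + Σ d_i Y^i`
    (f g : MvPowerSeries (Fin 2) R)
    (hf : ∀ s : Fin 2 →₀ ℕ, MvPowerSeries.coeff s f =
      if s 1 = 0 then a (s 0) else if s 0 = 0 then b (s 1) else 0)
    (hg : ∀ s : Fin 2 →₀ ℕ, MvPowerSeries.coeff s g =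
      if s 1 = 0 then -∑' k : ℕ, a (k + s 0 + 1)
      else if s 0 = 0 then ∑' k : ℕ, b (k + s 1) * π ^ (e * k) else 0) :
    (Ideal.Quotient.mk (Ideal.span {(MvPowerSeries.X 0 : MvPowerSeries (Fin 2) R) *
        MvPowerSeries.X 1 - MvPowerSeries.C (σ := Fin 2) (R := R) (π ^ e)}))
      ((MvPowerSeries.X 1) * f) =
    (Ideal.Quotient.mk (Ideal.span {(MvPowerSeries.X 0 : MvPowerSeries (Fin 2) R) *
        MvPowerSeries.X 1 - MvPowerSeries.C (σ := Fin 2) (R := R) (π ^ e)}))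
      ((MvPowerSeries.X 1 - MvPowerSeries.C (σ := Fin 2) (R := R) (π ^ e)) * g) := by
  classical
  open MvPowerSeries in
  -- shift lemmas for the tail sums
  have ha_shift : ∀ i : ℕ, (∑' k : ℕ, a (k + i)) = a i + ∑' k : ℕ, a (k + i + 1) := by
    intro i
    rw [Summable.tsum_eq_zero_add (hSa i)]
    simp only [Nat.zero_add]
    congr 1
    apply tsum_congr
    intro k
    congr 1
    omega
  have hb_shift : ∀ j : ℕ, (∑' k : ℕ, b (k + j) * π ^ (e * k))
      = b j + π ^ e * ∑' k : ℕ, b (k + (j + 1)) * π ^ (e * k) := by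
    intro j
    rw [Summable.tsum_eq_zero_add (hSb j)]
    simp only [Nat.zero_add, mul_zero, pow_zero, mul_one]
    congr 1
    rw [← (hSb (j + 1)).tsum_mul_left (π ^ e)]
    apply tsum_congr
    intro k
    have h1 : k + 1 + j = k + (j + 1) := by omega
    have h2 : e * (k + 1) = e + e * k := by ring
    rw [h1, h2, pow_add]
    ring
  have hsum0 : a 0 + (∑' k : ℕ, a (k + 1)) + π ^ e * ∑' k : ℕ, b (k + 1) * π ^ (e * k) = 0 := by
    have hSa0 : Summable a := by simpa using hSa 0
    have hSb0 : Summable (fun i : ℕ => b i * π ^ (e * i)) := by simpa using hSb 0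
    have hts := hf1.tsum_eq
    rw [Summable.tsum_add hSa0 hSb0] at hts
    have h1 : (∑' k : ℕ, a k) = a 0 + ∑' k : ℕ, a (k + 1) := by simpa using ha_shift 0
    have h2 : (∑' k : ℕ, b k * π ^ (e * k))
        = π ^ e * ∑' k : ℕ, b (k + 1) * π ^ (e * k) := by
      have := hb_shift 0
      simpa [hb0] using this
    rw [h1, h2] at hts
    linear_combination hts
  -- the auxiliary series h with Y·f − (Y−πᵉ)·g = (XY−πᵉ)·h
  set h : MvPowerSeries (Fin 2) R :=
    fun s => if s 1 = 0 then ∑' k : ℕ, a (k + s 0 + 1) else 0 with hh_def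
  have hh : ∀ s : Fin 2 →₀ ℕ, MvPowerSeries.coeff s h =
      if s 1 = 0 then ∑' k : ℕ, a (k + s 0 + 1) else 0 := fun s => rfl
  have key : MvPowerSeries.X 1 * f
      - (MvPowerSeries.X 1 - MvPowerSeries.C (σ := Fin 2) (R := R) (π ^ e)) * g
      = ((MvPowerSeries.X 0 : MvPowerSeries (Fin 2) R) * MvPowerSeries.X 1
          - MvPowerSeries.C (σ := Fin 2) (R := R) (π ^ e)) * h := by
    ext s
    -- generic coefficient computations
    have hXmul : ∀ φ : MvPowerSeries (Fin 2) R, MvPowerSeries.coeff s (MvPowerSeries.X 1 * φ)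
        = if s 1 = 0 then 0 else MvPowerSeries.coeff (s - Finsupp.single 1 1) φ := by
      intro φ
      rw [X_def, coeff_monomial_mul]
      by_cases hj : s 1 = 0
      · rw [if_neg, if_pos hj]
        rw [Finsupp.single_le_iff, hj]; omega
      · rw [if_pos, if_neg hj, one_mul]
        rw [Finsupp.single_le_iff]; omega
    have e0 : (s - Finsupp.single 1 1 : Fin 2 →₀ ℕ) 0 = s 0 := by
      rw [Finsupp.tsub_apply, Finsupp.single_apply]; simp
    have e1 : (s - Finsupp.single 1 1 : Fin 2 →₀ ℕ) 1 = s 1 - 1 := by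
      rw [Finsupp.tsub_apply, Finsupp.single_apply]; simp
    have hXYmul : MvPowerSeries.coeff s (MvPowerSeries.X 0 * MvPowerSeries.X 1 * h)
        = if s 0 = 0 ∨ s 1 = 0 then 0
          else MvPowerSeries.coeff (s - (Finsupp.single 0 1 + Finsupp.single 1 1)) h := by
      rw [X_def, X_def, monomial_mul_monomial, one_mul, coeff_monomial_mul]
      have hle : Finsupp.single (0 : Fin 2) 1 + Finsupp.single 1 1 ≤ s
          ↔ ¬(s 0 = 0 ∨ s 1 = 0) := by
        rw [Finsupp.le_def]
        constructor
        · intro hl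
          have h0 := hl 0
          have h1' := hl 1
          simp [Finsupp.add_apply, Finsupp.single_apply] at h0 h1'
          omega
        · intro hl i
          push_neg at hl
          fin_cases i <;> simp [Finsupp.add_apply, Finsupp.single_apply] <;> omega
      by_cases hc : s 0 = 0 ∨ s 1 = 0
      · rw [if_neg (by rw [hle]; exact not_not_intro hc), if_pos hc]
      · rw [if_pos (hle.mpr hc), if_neg hc, one_mul]
    have e0' : (s - (Finsupp.single 0 1 + Finsupp.single 1 1) : Fin 2 →₀ ℕ) 0 = s 0 - 1 := by
      rw [Finsupp.tsub_apply, Finsupp.add_apply, Finsupp.single_apply, Finsupp.single_apply]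
      simp
    have e1' : (s - (Finsupp.single 0 1 + Finsupp.single 1 1) : Fin 2 →₀ ℕ) 1 = s 1 - 1 := by
      rw [Finsupp.tsub_apply, Finsupp.add_apply, Finsupp.single_apply, Finsupp.single_apply]
      simp
    rw [map_sub, sub_mul, map_sub, sub_mul, map_sub, hXmul f, hXmul g, hXYmul,
      MvPowerSeries.coeff_C_mul, MvPowerSeries.coeff_C_mul,
      hf, hg, hg, hh, hh, e0, e1, e0', e1']
    -- now pure casework on i = s 0, j = s 1
    set i := s 0 with hi
    set j := s 1 with hj
    clear_value i j
    by_cases hj0 : j = 0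
    · subst hj0
      simp only [if_true, ite_true, or_true, eq_self_iff_true]
      ring
    · by_cases hj1 : j = 1
      · subst hj1
        by_cases hi0 : i = 0
        · subst hi0
          simp only [if_neg hj0, Nat.sub_self, if_true, ite_true, true_or, eq_self_iff_true]
          linear_combination hsum0
        · have hT : (∑' k : ℕ, a (k + (i - 1) + 1)) = a i + ∑' k : ℕ, a (k + i + 1) := by
            rw [← ha_shift i]
            apply tsum_congr
            intro k
            congr 1
            omega
          simp only [if_neg hj0, Nat.sub_self, if_true, ite_true, eq_self_iff_true, hi0,
            if_false, ite_false, false_or, hT]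
          ring
      · have hj1' : ¬ (j - 1 = 0) := by omega
        by_cases hi0 : i = 0
        · subst hi0
          have hbs := hb_shift (j - 1)
          have hjj : j - 1 + 1 = j := by omega
          rw [hjj] at hbs
          simp only [if_neg hj0, hj1', if_false, ite_false, if_true, ite_true,
            eq_self_iff_true, true_or, ite_self]
          linear_combination -hbs
        · simp only [if_neg hj0, hj1', hi0, if_false, ite_false, false_or, ite_self]
          ring
  rw [Ideal.Quotient.eq, Ideal.mem_span_singleton]
  exact ⟨h, key⟩
end
end

section
/- Let R be a complete discrete valuation ring with uniformizer π and e a positive integer. Let A = R{X,Y}/(XY − π^e). For f = Σ_{i∈ℤ} a_i X^i ∈ A (written as a Laurent series in X), define η_X(f) = min_i ord_π(a_i), v_X(f) = min{ i : ord_π(a_i) = η_X(f) }, and ν_X(f) = max{ i : ord_π(a_i) = η_X(f) }. If ν_X(f) = v_X(f) = n and η_X(f) = 0, then f = a_n X^n u with u a unit in the subring of A consisting of power series in X convergent on the region |X| = 1, i.e. f has no zero x with |X(x)| = 1. -/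
noncomputable section

/-- let `f = Σ_{i∈ℤ} a_i X^i` be a bounded function on the closed annulus
`|π|^e ≤ |X| ≤ 1` over a complete discrete valuation ring `R`, with `η_X(f) = 0` and
`v_X(f) = ν_X(f) = n`, i.e. `a_n` is a unit of `R` and `π ∣ a_i` for all `i ≠ n`.
Then `f` has no zero `x` with `|x| = 1`: for every valued field extension `L` and every
`x ∈ L` with `‖x‖ = 1`, the sum `Σ a_i x^i` is nonzero. -/
theorem no_zero_on_unit_circle
    (R : Type*) [CommRing R] [IsDomain R] [IsDiscreteValuationRing R]
    (π : R) (hπ : Irreducible π) [IsAdicComplete (Ideal.span {π}) R]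
    (e : ℕ) (he : 0 < e) (n : ℤ) (a : ℤ → R)
    -- Laurent series condition: `ord_π(a_{-i}) ≥ e·i`
    (hadm : ∀ i : ℕ, π ^ (e * i) ∣ a (-(i : ℤ)))
    -- `η_X(f) = 0` with unique dominant index `n`
    (han : ¬ π ∣ a n) (hother : ∀ i : ℤ, i ≠ n → π ∣ a i)
    -- a complete ultrametric valued extension field
    (L : Type*) [NormedField L] [CompleteSpace L] [IsUltrametricDist L]
    (φ : R →+* L)
    (hφ : ∀ r : R, ‖φ r‖ ≤ 1) (hφπ : ‖φ π‖ < 1) (hφπ0 : φ π ≠ 0)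
    (hφan : ‖φ (a n)‖ = 1) :
    ∀ x : L, ‖x‖ = 1 → ∀ S : L, HasSum (fun i : ℤ => φ (a i) * x ^ i) S → S ≠ 0 := by
  intro x hx S hS hS0
  set g : ℤ → L := fun i : ℤ => φ (a i) * x ^ i with hg
  have hxz : ∀ i : ℤ, ‖x ^ i‖ = 1 := by
    intro i
    rw [norm_zpow, hx, one_zpow]
  have hgn : ‖g n‖ = 1 := by
    simp [hg, norm_mul, hxz, hφan]
  -- the sum of the other terms
  have hS' : HasSum (Function.update g n 0) (0 - g n + S) := hS.update n 0
  have hbound : ∀ i : ℤ, ‖Function.update g n 0 i‖ ≤ ‖φ π‖ := by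
    intro i
    rcases eq_or_ne i n with rfl | hi
    · simp [Function.update_self]
    · rw [Function.update_of_ne hi]
      obtain ⟨c, hc⟩ := hother i hi
      simp only [hg, norm_mul, hxz, mul_one, hc, map_mul]
      calc ‖φ π‖ * ‖φ c‖ ≤ ‖φ π‖ * 1 := by
            exact mul_le_mul_of_nonneg_left (hφ c) (norm_nonneg _)
        _ = ‖φ π‖ := mul_one _
  have hsum : ‖0 - g n + S‖ ≤ ‖φ π‖ := by
    rw [← hS'.tsum_eq]
    exact IsUltrametricDist.norm_tsum_le_of_forall_le_of_nonneg (norm_nonneg _) hbound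
  rw [hS0] at hsum
  simp only [zero_sub, add_zero, norm_neg] at hsum
  rw [hgn] at hsum
  exact absurd (lt_of_le_of_lt hsum hφπ) (lt_irrefl 1)
end
end

section
/- With the notation of the branch-switching automorphism above (σ of order 2 on A = R[[X,Y]]/(XY − π^e) with σ(X) = U₁Y, σ(Y) = U₂X, units U₁, U₂ ∈ A^×): the relations σ(U₁)·U₂ = 1 and U₁·U₂ = ζ^e hold in A, and consequently if ζ = −1 then e is even. -/
noncomputable section

abbrev annulusRel (R : Type*) [CommRing R] (c : R) : Ideal (MvPowerSeries (Fin 2) R) :=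
  Ideal.span {(MvPowerSeries.X 0 : MvPowerSeries (Fin 2) R) * MvPowerSeries.X 1 -
    MvPowerSeries.C (σ := Fin 2) (R := R) c}

abbrev OpenAnnulusRing (R : Type*) [CommRing R] (c : R) : Type _ :=
  MvPowerSeries (Fin 2) R ⧸ annulusRel R c

lemma annulus_Cc_regular {R : Type*} [CommRing R] [IsDomain R] {c : R} (hc : c ≠ 0)
    (f : MvPowerSeries (Fin 2) R) (hf : f * MvPowerSeries.C (σ := Fin 2) (R := R) c = 0) : f = 0 := by
  ext n
  have := congrArg (MvPowerSeries.coeff n) hf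
  rw [MvPowerSeries.coeff_mul_C, map_zero] at this
  simpa [hc] using mul_eq_zero.mp this

lemma annulus_key {R : Type*} [CommRing R] [IsDomain R] {c : R} (hc : c ≠ 0)
    (g : MvPowerSeries (Fin 2) R)
    (hg : g * MvPowerSeries.C (σ := Fin 2) (R := R) c ∈ annulusRel R c) :
    g ∈ annulusRel R c := by
  obtain ⟨h, hh⟩ := Ideal.mem_span_singleton'.mp hg
  set m : Fin 2 →₀ ℕ := Finsupp.single 0 1 + Finsupp.single 1 1 with hm
  have hXX : (MvPowerSeries.X 0 : MvPowerSeries (Fin 2) R) * MvPowerSeries.X 1 =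
      MvPowerSeries.monomial m 1 := by
    rw [MvPowerSeries.X_def, MvPowerSeries.X_def, MvPowerSeries.monomial_mul_monomial, one_mul]
  set h' : MvPowerSeries (Fin 2) R :=
    fun n => MvPowerSeries.coeff (n + m) g + MvPowerSeries.coeff (n + m) h with hh'
  have hcoeff : ∀ n, MvPowerSeries.coeff n h =
      c * (MvPowerSeries.coeff (n + m) g + MvPowerSeries.coeff (n + m) h) := by
    intro n
    have := congrArg (MvPowerSeries.coeff (n + m)) hh
    rw [mul_sub, hXX, map_sub, MvPowerSeries.coeff_add_mul_monomial,
      MvPowerSeries.coeff_mul_C, MvPowerSeries.coeff_mul_C, mul_one] at this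
    ring_nf at this ⊢
    linear_combination this
  have hfac : h = MvPowerSeries.C (σ := Fin 2) (R := R) c * h' := by
    ext n
    rw [MvPowerSeries.coeff_C_mul]
    exact hcoeff n
  rw [Ideal.mem_span_singleton']
  refine ⟨h', ?_⟩
  have hz : (h' * ((MvPowerSeries.X 0 : MvPowerSeries (Fin 2) R) * MvPowerSeries.X 1 -
      MvPowerSeries.C (σ := Fin 2) (R := R) c) - g) * MvPowerSeries.C (σ := Fin 2) (R := R) c = 0 := by
    rw [sub_mul]
    rw [hfac] at hh
    linear_combination (norm := ring_nf) hh
  exact sub_eq_zero.mp (annulus_Cc_regular hc _ hz)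

lemma annulus_regular {R : Type*} [CommRing R] [IsDomain R] {c : R} (hc : c ≠ 0)
    (a : OpenAnnulusRing R c) (ha : a * algebraMap R (OpenAnnulusRing R c) c = 0) :
    a = 0 := by
  obtain ⟨g, rfl⟩ := Ideal.Quotient.mk_surjective a
  have h1 : Ideal.Quotient.mk (annulusRel R c) (g * MvPowerSeries.C (σ := Fin 2) (R := R) c) = 0 := ha
  rw [Ideal.Quotient.eq_zero_iff_mem] at h1 ⊢
  exact annulus_key hc g h1

set_option maxHeartbeats 1000000 in
/-- for a branch-switching involution `σ` of `A = R[[X,Y]]/(XY − π^e)` with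
`σ(X) = U₁Y`, `σ(Y) = U₂X` and `σ(π) = ζπ`, `ζ ∈ {±1}`, one has `σ(U₁)·U₂ = 1` and
`U₁·U₂ = ζ^e`; consequently, if `ζ = −1` then `e` is even. -/
theorem branch_switching_unit_relations
    (R : Type*) [CommRing R] [IsDomain R] [IsDiscreteValuationRing R]
    (π : R) (hπ : Irreducible π) [IsAdicComplete (Ideal.span {π}) R]
    -- the residue characteristic of `R` is different from 2
    (h2 : IsUnit (2 : R))
    (e : ℕ) (he : 0 < e) (ζ : R) (hζ : ζ = 1 ∨ ζ = -1)
    (σ : OpenAnnulusRing R (π ^ e) →+* OpenAnnulusRing R (π ^ e))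
    (hord : ∀ t, σ (σ t) = t)
    (hσπ : σ (algebraMap R (OpenAnnulusRing R (π ^ e)) π) =
      algebraMap R (OpenAnnulusRing R (π ^ e)) (ζ * π))
    -- when `ζ = −1`, `σ` induces the identity on the residue field
    (hres : ζ = -1 → ∀ t : OpenAnnulusRing R (π ^ e),
      σ t - t ∈ Ideal.span ({algebraMap R (OpenAnnulusRing R (π ^ e)) π,
        Ideal.Quotient.mk (annulusRel R (π ^ e)) (MvPowerSeries.X 0),
        Ideal.Quotient.mk (annulusRel R (π ^ e)) (MvPowerSeries.X 1)} :
          Set (OpenAnnulusRing R (π ^ e))))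
    (U₁ U₂ : (OpenAnnulusRing R (π ^ e))ˣ)
    (hσX : σ (Ideal.Quotient.mk (annulusRel R (π ^ e)) (MvPowerSeries.X 0)) =
      (U₁ : OpenAnnulusRing R (π ^ e)) *
        Ideal.Quotient.mk (annulusRel R (π ^ e)) (MvPowerSeries.X 1))
    (hσY : σ (Ideal.Quotient.mk (annulusRel R (π ^ e)) (MvPowerSeries.X 1)) =
      (U₂ : OpenAnnulusRing R (π ^ e)) *
        Ideal.Quotient.mk (annulusRel R (π ^ e)) (MvPowerSeries.X 0)) :
    σ (U₁ : OpenAnnulusRing R (π ^ e)) * (U₂ : OpenAnnulusRing R (π ^ e)) = 1 ∧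
    (U₁ : OpenAnnulusRing R (π ^ e)) * (U₂ : OpenAnnulusRing R (π ^ e)) =
      algebraMap R (OpenAnnulusRing R (π ^ e)) (ζ ^ e) ∧
    (ζ = -1 → Even e) := by
  have hc0 : (π ^ e : R) ≠ 0 := pow_ne_zero e hπ.ne_zero
  set Q := Ideal.Quotient.mk (annulusRel R (π ^ e)) with hQ
  set Xq := Q (MvPowerSeries.X 0) with hXq
  set Yq := Q (MvPowerSeries.X 1) with hYq
  set alg := algebraMap R (OpenAnnulusRing R (π ^ e)) with halg
  -- X*Y = π^e in A
  have hXY : Xq * Yq = alg (π ^ e) := by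
    show Q (MvPowerSeries.X 0 * MvPowerSeries.X 1) = Q (MvPowerSeries.C (σ := Fin 2) (R := R) (π ^ e))
    rw [Ideal.Quotient.eq]
    exact Ideal.mem_span_singleton_self _
  -- σ on π^e
  have hσc : σ (alg (π ^ e)) = alg (ζ ^ e) * alg (π ^ e) := by
    rw [map_pow, map_pow, hσπ, map_mul, mul_pow, map_pow]
  -- relation (a): σ(U₁)·U₂·X = X
  have rel1' : (σ (U₁ : OpenAnnulusRing R (π ^ e)) * (U₂ : OpenAnnulusRing R (π ^ e)) - 1)
      * Xq = 0 := by
    have h := hord Xq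
    rw [hσX, map_mul, hσY] at h
    linear_combination h
  have rel1 : σ (U₁ : OpenAnnulusRing R (π ^ e)) * (U₂ : OpenAnnulusRing R (π ^ e)) = 1 := by
    have h0 : (σ (U₁ : OpenAnnulusRing R (π ^ e)) * (U₂ : OpenAnnulusRing R (π ^ e)) - 1)
        * alg (π ^ e) = 0 := by
      rw [← hXY]
      linear_combination Yq * rel1'
    exact sub_eq_zero.mp (annulus_regular hc0 _ h0)
  -- relation (b): U₁U₂ = ζ^e
  have rel2 : (U₁ : OpenAnnulusRing R (π ^ e)) * (U₂ : OpenAnnulusRing R (π ^ e))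
      = alg (ζ ^ e) := by
    have h1 : σ (Xq * Yq) = (U₁ : OpenAnnulusRing R (π ^ e)) *
        (U₂ : OpenAnnulusRing R (π ^ e)) * alg (π ^ e) := by
      rw [map_mul, hσX, hσY, ← hXY]; ring
    rw [hXY, hσc] at h1
    have h0 : ((U₁ : OpenAnnulusRing R (π ^ e)) * (U₂ : OpenAnnulusRing R (π ^ e))
        - alg (ζ ^ e)) * alg (π ^ e) = 0 := by
      linear_combination - h1
    exact sub_eq_zero.mp (annulus_regular hc0 _ h0)
  refine ⟨rel1, rel2, ?_⟩
  -- part (c)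
  intro hζ'
  by_contra hodd
  have hoddE : Odd e := Nat.not_even_iff_odd.mp hodd
  have hζe : ζ ^ e = -1 := by rw [hζ']; exact hoddE.neg_one_pow
  have rel2' : (U₁ : OpenAnnulusRing R (π ^ e)) * (U₂ : OpenAnnulusRing R (π ^ e)) = -1 := by
    rw [rel2, hζe, map_neg, map_one]
  -- 2 is in the maximal ideal m
  set m : Ideal (OpenAnnulusRing R (π ^ e)) := Ideal.span ({alg π, Xq, Yq} :
    Set (OpenAnnulusRing R (π ^ e))) with hmI
  have hmem : σ (U₁ : OpenAnnulusRing R (π ^ e)) - (U₁ : OpenAnnulusRing R (π ^ e)) ∈ m :=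
    hres hζ' (U₁ : OpenAnnulusRing R (π ^ e))
  have h2mem : (2 : OpenAnnulusRing R (π ^ e)) ∈ m := by
    have h2' : (σ (U₁ : OpenAnnulusRing R (π ^ e)) - (U₁ : OpenAnnulusRing R (π ^ e))) *
        (U₂ : OpenAnnulusRing R (π ^ e)) ∈ m := Ideal.mul_mem_right _ _ hmem
    have heq : (σ (U₁ : OpenAnnulusRing R (π ^ e)) - (U₁ : OpenAnnulusRing R (π ^ e))) *
        (U₂ : OpenAnnulusRing R (π ^ e)) = 2 := by
      rw [sub_mul, rel1, rel2']; ring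
    rwa [heq] at h2'
  have h2A : IsUnit (2 : OpenAnnulusRing R (π ^ e)) := by
    have := h2.map alg
    rwa [map_ofNat] at this
  have hmtop : m = ⊤ := Ideal.eq_top_of_isUnit_mem m h2mem h2A
  -- residue map φ : A → R/(π)
  have hker : ∀ a ∈ annulusRel R (π ^ e),
      ((Ideal.Quotient.mk (Ideal.span {π})).comp
        (MvPowerSeries.constantCoeff (σ := Fin 2) (R := R))) a = 0 := by
    intro a ha
    rw [annulusRel, Ideal.mem_span_singleton'] at ha
    obtain ⟨b, rfl⟩ := ha
    have h0 : (MvPowerSeries.constantCoeff (σ := Fin 2) (R := R))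
        ((MvPowerSeries.X 0 : MvPowerSeries (Fin 2) R) * MvPowerSeries.X 1 -
          MvPowerSeries.C (σ := Fin 2) (R := R) (π ^ e)) = -π ^ e := by
      simp
    rw [RingHom.comp_apply, map_mul, h0, map_mul,
      Ideal.Quotient.eq_zero_iff_mem.mpr
        (neg_mem (Ideal.mem_span_singleton.mpr (dvd_pow_self π he.ne'))), mul_zero]
  set φ : OpenAnnulusRing R (π ^ e) →+* R ⧸ Ideal.span {π} :=
    Ideal.Quotient.lift (annulusRel R (π ^ e))
      ((Ideal.Quotient.mk (Ideal.span {π})).comp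
        (MvPowerSeries.constantCoeff (σ := Fin 2) (R := R))) hker with hφ
  have hφgen : m ≤ RingHom.ker φ := by
    rw [hmI, Ideal.span_le]
    intro x hx
    simp only [Set.mem_insert_iff, Set.mem_singleton_iff] at hx
    rcases hx with rfl | rfl | rfl
    · show φ (Q (MvPowerSeries.C (σ := Fin 2) (R := R) π)) = 0
      rw [hQ, hφ, Ideal.Quotient.lift_mk, RingHom.comp_apply, MvPowerSeries.constantCoeff_C,
        Ideal.Quotient.eq_zero_iff_mem]
      exact Ideal.mem_span_singleton_self _
    · show φ (Q (MvPowerSeries.X 0)) = 0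
      rw [hQ, hφ, Ideal.Quotient.lift_mk, RingHom.comp_apply, MvPowerSeries.constantCoeff_X,
        map_zero]
    · show φ (Q (MvPowerSeries.X 1)) = 0
      rw [hQ, hφ, Ideal.Quotient.lift_mk, RingHom.comp_apply, MvPowerSeries.constantCoeff_X,
        map_zero]
  have h1m : (1 : OpenAnnulusRing R (π ^ e)) ∈ m := hmtop ▸ Submodule.mem_top
  have h10 : (1 : R ⧸ Ideal.span {π}) = 0 := by
    have := hφgen h1m
    rwa [RingHom.mem_ker, map_one] at this
  have h1π : (1 : R) ∈ Ideal.span {π} := by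
    rw [← Ideal.Quotient.eq_zero_iff_mem, map_one]
    exact h10
  obtain ⟨u, hu⟩ := Ideal.mem_span_singleton'.mp h1π
  exact hπ.not_isUnit (IsUnit.of_mul_eq_one (a := π) u (by linear_combination hu))
end
end

section
/- Successive approximation lemma: let R be a complete discrete valuation ring with uniformizer π, A a π-adically complete flat R-algebra, and σ an order-2 continuous automorphism of A with σ(π) = ±π. Let U ∈ A satisfy σ(πU) = πU, and suppose that every σ-invariant element h ∈ π^{n+1}A can be written h ≡ b + f + σ(f) mod π^{n+2} with b ∈ π^{n+1}R, σ(b) = b, f ∈ π^{n+1}A. Then there exist a unit η ∈ A^× and a unit v ∈ R^× with σ(v) = v such that η·σ(η) = v·(1 + πU). -/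
noncomputable section


section AuxSA

lemma sa_dep_choice {α : Type*} (P : ℕ → α → Prop) (Q : ℕ → α → α → Prop) (a0 : α)
    (h0 : P 0 a0) (hstep : ∀ n a, P n a → ∃ b, P (n+1) b ∧ Q n a b) :
    ∃ f : ℕ → α, f 0 = a0 ∧ (∀ n, P n (f n)) ∧ ∀ n, Q n (f n) (f (n+1)) := by
  choose! g hg1 hg2 using hstep
  set f : ℕ → α := fun n => Nat.rec a0 (fun n x => g n x) n with hf
  have hP : ∀ n, P n (f n) := by
    intro n; induction n with
    | zero => exact h0
    | succ n ih => exact hg1 n (f n) ih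
  exact ⟨f, rfl, hP, fun n => hg2 n (f n) (hP n)⟩

variable {A : Type*} [CommRing A] (p : A) [IsAdicComplete (Ideal.span {p}) A]

lemma sa_smul_top (n : ℕ) :
    (Ideal.span {p} ^ n • ⊤ : Submodule A A) = Ideal.span {p ^ n} := by
  rw [smul_eq_mul, Ideal.mul_top, Ideal.span_singleton_pow]

lemma sa_haus (z : A) (hz : ∀ n, p ^ n ∣ z) : z = 0 := by
  refine (IsAdicComplete.toIsHausdorff : IsHausdorff (Ideal.span {p}) A).haus z fun n => ?_
  rw [SModEq.sub_mem, sub_zero, sa_smul_top, Ideal.mem_span_singleton]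
  exact hz n

lemma sa_limit (s : ℕ → A) (hs : ∀ n, p ^ (n+1) ∣ s (n+1) - s n) :
    ∃ L : A, ∀ n, p ^ n ∣ L - s n := by
  have key : ∀ m n, m ≤ n → p ^ m ∣ s n - s m := by
    intro m n hmn
    induction n, hmn using Nat.le_induction with
    | base => simp
    | succ n hmn ih =>
      have h1 : p ^ m ∣ s (n+1) - s n :=
        dvd_trans (pow_dvd_pow p (Nat.le_succ_of_le hmn)) (hs n)
      have := dvd_add h1 ih
      simpa using this
  have hc : ∀ {m n : ℕ}, m ≤ n → s m ≡ s n [SMOD Ideal.span {p} ^ m • (⊤ : Submodule A A)] := by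
    intro m n hmn
    rw [SModEq.sub_mem, sa_smul_top, Ideal.mem_span_singleton]
    simpa using (key m n hmn).neg_right
  obtain ⟨L, hL⟩ := IsPrecomplete.prec (IsAdicComplete.toIsPrecomplete) hc
  refine ⟨L, fun n => ?_⟩
  have := hL n
  rw [SModEq.sub_mem, sa_smul_top, Ideal.mem_span_singleton] at this
  simpa using this.neg_right

lemma sa_isUnit_one_add (x : A) (hx : p ∣ x) : IsUnit (1 + x) := by
  set s : ℕ → A := fun n => ∑ i ∈ Finset.range (n+1), (-x) ^ i with hsdef
  have hs : ∀ n, p ^ (n+1) ∣ s (n+1) - s n := by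
    intro n
    have : s (n+1) - s n = (-x) ^ (n+1) := by
      simp [hsdef, Finset.sum_range_succ]
    rw [this]
    exact pow_dvd_pow_of_dvd (dvd_neg.mpr hx) _
  obtain ⟨L, hL⟩ := sa_limit p s hs
  have hgeom : ∀ n, (1 + x) * s n = 1 - (-x) ^ (n+1) := by
    intro n
    have := geom_sum_mul (-x) (n+1)
    have h2 : (-x - 1) = -(1 + x) := by ring
    rw [h2] at this
    have : -(s n * (1 + x)) = (-x) ^ (n+1) - 1 := by
      rw [← this]; ring
    have := congrArg Neg.neg this
    rw [neg_neg] at this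
    rw [mul_comm]; rw [this]; ring
  have hz : ∀ n, p ^ n ∣ (1 + x) * L - 1 := by
    intro n
    have h1 : (1 + x) * L - 1 = (1 + x) * (L - s n) + ((1 + x) * s n - 1) := by ring
    have h2 : p ^ n ∣ (1 + x) * (L - s n) := (hL n).mul_left _
    have h3 : p ^ n ∣ (1 + x) * s n - 1 := by
      rw [hgeom n]
      have h4 : p ^ n ∣ (-x) ^ (n+1) :=
        dvd_trans (pow_dvd_pow p n.le_succ) (pow_dvd_pow_of_dvd (dvd_neg.mpr hx) _)
      have h5 : (1 : A) - (-x) ^ (n+1) - 1 = -((-x) ^ (n+1)) := by ring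
      rw [h5]; exact h4.neg_right
    rw [h1]; exact dvd_add h2 h3
  have : (1 + x) * L = 1 := by
    have := sa_haus p _ hz
    linear_combination this
  exact ⟨⟨1 + x, L, this, by rw [mul_comm]; exact this⟩, rfl⟩

end AuxSA


/-- successive approximation lemma.  Let `A` be a π-adically complete,
π-torsion-free algebra over a complete discrete valuation ring `R`, and `σ` an order-2
automorphism of `A` with `σ(π) = ±π` which restricts to `R`.  Let `U ∈ A` with `σ(πU) = πU`,
and assume every `σ`-invariant element of `π^{n+1}A` is congruent to `b + f + σ(f)` modulo
`π^{n+2}` with `b ∈ π^{n+1}R` σ-invariant and `f ∈ π^{n+1}A`.  Then there are a unit `η ∈ A^×`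
and a `σ`-invariant unit `v ∈ R^×` with `η·σ(η) = v·(1 + πU)`. -/
theorem successive_approximation
    (R A : Type*) [CommRing R] [IsDomain R] [IsDiscreteValuationRing R]
    [CommRing A] [Algebra R A]
    (π : R) (hπ : Irreducible π)
    [IsAdicComplete (Ideal.span {π}) R]
    [IsAdicComplete (Ideal.span {algebraMap R A π}) A]
    (hflat : ∀ x : A, algebraMap R A π * x = 0 → x = 0)
    (σ : A →+* A) (hord : ∀ t, σ (σ t) = t)
    (hσR : ∀ r : R, ∃ r' : R, σ (algebraMap R A r) = algebraMap R A r')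
    (hσπ : σ (algebraMap R A π) = algebraMap R A π ∨
      σ (algebraMap R A π) = - algebraMap R A π)
    (U : A) (hU : σ (algebraMap R A π * U) = algebraMap R A π * U)
    (hsplit : ∀ (n : ℕ) (h : A), σ h = h →
      h ∈ Ideal.span ({algebraMap R A (π ^ (n + 1))} : Set A) →
      ∃ (b : R) (f : A), π ^ (n + 1) ∣ b ∧
        σ (algebraMap R A b) = algebraMap R A b ∧
        f ∈ Ideal.span ({algebraMap R A (π ^ (n + 1))} : Set A) ∧
        h - (algebraMap R A b + f + σ f) ∈
          Ideal.span ({algebraMap R A (π ^ (n + 2))} : Set A)) :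
    ∃ (η : Aˣ) (v : Rˣ),
      σ (algebraMap R A (v : R)) = algebraMap R A (v : R) ∧
      (η : A) * σ (η : A) =
        algebraMap R A (v : R) * (1 + algebraMap R A π * U) := by
  classical
  set φ := algebraMap R A with hφdef
  set p := φ π with hpdef
  have hσp : p ∣ σ p := by
    rcases hσπ with h | h
    · rw [h]
    · rw [h]; exact dvd_neg.mpr dvd_rfl
  have hσd : ∀ (k : ℕ) (x : A), p ^ k ∣ x → p ^ k ∣ σ x := by
    rintro k x ⟨y, rfl⟩
    rw [map_mul, map_pow]
    exact Dvd.dvd.mul_right (pow_dvd_pow_of_dvd hσp k) _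
  -- the invariant
  have h0 : (fun (n : ℕ) (x : A × R) => σ (φ x.2) = φ x.2 ∧ p ∣ x.1 - 1 ∧
      p ^ (n+1) ∣ (φ x.2 * (1 + p * U) - x.1 * σ x.1)) 0 ((1 : A), (1 : R)) := by
    refine ⟨by simp, by simp, ?_⟩
    have : φ (1:R) * (1 + p * U) - (1:A) * σ 1 = p * U := by
      rw [map_one, map_one]; ring
    rw [this, zero_add, pow_one]
    exact dvd_mul_right p U
  have hstep : ∀ (n : ℕ) (x : A × R),
      (σ (φ x.2) = φ x.2 ∧ p ∣ x.1 - 1 ∧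
        p ^ (n+1) ∣ (φ x.2 * (1 + p * U) - x.1 * σ x.1)) →
      ∃ y : A × R, (σ (φ y.2) = φ y.2 ∧ p ∣ y.1 - 1 ∧
        p ^ (n+2) ∣ (φ y.2 * (1 + p * U) - y.1 * σ y.1)) ∧
        (p ^ (n+1) ∣ y.1 - x.1 ∧ π ^ (n+1) ∣ y.2 - x.2) := by
    rintro n ⟨e, v⟩ ⟨hv, he, hd⟩
    set h : A := φ v * (1 + p * U) - e * σ e with hh
    have hσh : σ h = h := by
      have h1 : σ h = σ (φ v) * (1 + σ (p * U)) - σ e * σ (σ e) := by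
        rw [hh, map_sub, map_mul, map_mul, map_add, map_one]
      rw [h1, hv, hU, hord, hh]; ring
    obtain ⟨b, f, hb, hbσ, hf, hrem⟩ := hsplit n h hσh (by
      rw [Ideal.mem_span_singleton, map_pow]; exact hd)
    rw [Ideal.mem_span_singleton, map_pow] at hf
    rw [Ideal.mem_span_singleton, map_pow] at hrem
    have hφb : p ^ (n+1) ∣ φ b := by
      obtain ⟨c, rfl⟩ := hb
      rw [map_mul, map_pow]; exact dvd_mul_right _ _
    have hpf : p ∣ f := (dvd_pow_self p n.succ_ne_zero).trans hf
    refine ⟨(e + f, v - b), ⟨?_, ?_, ?_⟩, ?_, ?_⟩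
    · rw [map_sub, map_sub, hv, hbσ]
    · have h1 : (e + f) - 1 = (e - 1) + f := by ring
      rw [h1]; exact dvd_add he hpf
    · have hid : φ (v - b) * (1 + p * U) - (e + f) * σ (e + f) =
          (h - (φ b + f + σ f)) - φ b * (p * U) - (e - 1) * σ f
            - f * (σ e - 1) - f * σ f := by
        rw [map_sub, map_add σ e f, hh]; ring
      have d2 : p ^ (n+2) ∣ φ b * (p * U) := by
        have : p ^ (n+1) * p ∣ φ b * (p * U) :=
          mul_dvd_mul hφb (dvd_mul_right p U)
        rwa [← pow_succ] at this
      have d3 : p ^ (n+2) ∣ (e - 1) * σ f := by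
        have : p * p ^ (n+1) ∣ (e - 1) * σ f :=
          mul_dvd_mul he (hσd (n+1) f hf)
        rwa [← pow_succ'] at this
      have d4 : p ^ (n+2) ∣ f * (σ e - 1) := by
        have hσe1 : p ∣ σ e - 1 := by
          have := hσd 1 (e - 1) (by rwa [pow_one])
          rw [map_sub, map_one, pow_one] at this
          exact this
        have : p ^ (n+1) * p ∣ f * (σ e - 1) := mul_dvd_mul hf hσe1
        rwa [← pow_succ] at this
      have d5 : p ^ (n+2) ∣ f * σ f := by
        have h1 : p ^ (n+2) ∣ p ^ (n+1) * p ^ (n+1) := by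
          rw [← pow_add]; exact pow_dvd_pow p (by omega)
        exact h1.trans (mul_dvd_mul hf (hσd (n+1) f hf))
      rw [hid]
      exact dvd_sub (dvd_sub (dvd_sub (dvd_sub hrem d2) d3) d4) d5
    · simpa using hf
    · simpa using hb.neg_right
  obtain ⟨s, hs0, hP, hQ⟩ := sa_dep_choice _ _ ((1 : A), (1 : R)) h0 hstep
  -- limits
  obtain ⟨η, hη⟩ := sa_limit p (fun n => (s n).1) (fun n => (hQ n).1)
  obtain ⟨v, hv⟩ := sa_limit π (fun n => (s n).2) (fun n => (hQ n).2)
  -- divisibility facts at the limit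
  have hvw : ∀ n : ℕ, p ^ n ∣ φ v - φ ((s n).2) := by
    intro n
    rw [← map_sub]
    have := map_dvd φ (hv n)
    rwa [map_pow] at this
  -- σ-invariance of φ v
  have hσv : σ (φ v) = φ v := by
    have key : ∀ n : ℕ, p ^ n ∣ σ (φ v) - φ v := by
      intro n
      have h2 : p ^ n ∣ σ (φ v) - φ ((s n).2) := by
        have := hσd n _ (hvw n)
        rwa [map_sub, (hP n).1] at this
      have h3 : σ (φ v) - φ v = (σ (φ v) - φ ((s n).2)) - (φ v - φ ((s n).2)) := by
        ring
      rw [h3]; exact dvd_sub h2 (hvw n)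
    have := sa_haus p _ key
    exact sub_eq_zero.mp this
  -- the limit equation
  have hmain : φ v * (1 + p * U) = η * σ η := by
    have key : ∀ n : ℕ, p ^ n ∣ φ v * (1 + p * U) - η * σ η := by
      intro n
      have t1 : p ^ n ∣ φ ((s n).2) * (1 + p * U) - (s n).1 * σ ((s n).1) :=
        (pow_dvd_pow p n.le_succ).trans (hP n).2.2
      have t2 : p ^ n ∣ (φ v - φ ((s n).2)) * (1 + p * U) := (hvw n).mul_right _
      have t3 : p ^ n ∣ η * (σ η - σ ((s n).1)) := by
        have := hσd n _ (hη n)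
        rw [map_sub] at this
        exact this.mul_left η
      have t4 : p ^ n ∣ (η - (s n).1) * σ ((s n).1) := (hη n).mul_right _
      have hid : φ v * (1 + p * U) - η * σ η =
          (φ ((s n).2) * (1 + p * U) - (s n).1 * σ ((s n).1))
            + (φ v - φ ((s n).2)) * (1 + p * U)
            - η * (σ η - σ ((s n).1)) - (η - (s n).1) * σ ((s n).1) := by
        ring
      rw [hid]
      exact dvd_sub (dvd_sub (dvd_add t1 t2) t3) t4
    have := sa_haus p _ key
    exact sub_eq_zero.mp this
  -- η is a unit
  have hηu : IsUnit η := by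
    have h1 : p ∣ η - (s 1).1 := by simpa [pow_one] using hη 1
    have h2 : p ∣ (s 1).1 - 1 := (hP 1).2.1
    have h3 : p ∣ η - 1 := by
      have := dvd_add h1 h2
      simpa using this
    have hu := sa_isUnit_one_add p (η - 1) h3
    rwa [show (1 : A) + (η - 1) = η by ring] at hu
  -- v is a unit
  have hvu : IsUnit v := by
    have hw0 : (s 0).2 = 1 := by rw [hs0]
    have h1 : π ∣ v - (s 1).2 := by simpa [pow_one] using hv 1
    have h2 : π ∣ (s 1).2 - 1 := by
      have := (hQ 0).2
      rwa [pow_one, hw0] at this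
    have h3 : π ∣ v - 1 := by
      have := dvd_add h1 h2
      simpa using this
    obtain ⟨c, hc⟩ := h3
    have hnu : -(π * c) ∈ nonunits R := by
      intro hcon
      have hcon' : IsUnit (π * c) := by simpa using hcon.neg
      exact hπ.not_isUnit (isUnit_of_mul_isUnit_left hcon')
    have := IsLocalRing.isUnit_one_sub_self_of_mem_nonunits _ hnu
    have heq : (1 : R) - -(π * c) = v := by
      rw [← hc]; ring
    rwa [heq] at this
  refine ⟨hηu.unit, hvu.unit, ?_, ?_⟩
  · rw [IsUnit.unit_spec]; exact hσv
  · rw [IsUnit.unit_spec, IsUnit.unit_spec]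
    exact hmain.symm
end
end

section
/- Descent of the annulus algebra along a totally tamely ramified quadratic-type extension: let R be a complete DVR with uniformizer π and residue characteristic prime to m, R' = R[ϖ] with ϖ^m = π, ζ ∈ R a primitive m-th root of unity, σ the R-automorphism of R' sending ϖ to ζϖ. Write e = a + bm with 0 ≤ a < m, b ≥ 0, set A' = R'[[X,Y]]/(XY − ϖ^e), and extend σ to A' by σ(X) = ζ^α X, σ(Y) = ζ^β Y where α + β ≡ e (mod m), 0 ≤ α, β ≤ m−1. Then the ring of σ-coinvariants of the coefficient-wise descent of A' is isomorphic to R[[X_α, Y_β]]/(X_α Y_β − π^b) if α + β = a, and to R[[X_α, Y_β]]/(π·X_α Y_β − π^b) if α + β = m + a. -/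
noncomputable section

open scoped BigOperators
set_option linter.unusedSectionVars false

/-- The coefficient equations `f_i` obtained by expanding `XY − ϖ^e` in the basis
`1, ϖ, …, ϖ^{m−1}` of `R' = R[ϖ]` over `R`, after writing `X = Σ X_j ϖ^j`, `Y = Σ Y_j ϖ^j`:
`f_i = Σ_{j+k=i} X_j Y_k + (Σ_{j+k=m+i} X_j Y_k)·π − δ_{a,i}·π^b`.
Here the variables are indexed by `Fin m ⊕ Fin m` (`inl` for the `X_j`, `inr` for the `Y_j`). -/
def descentEq {R : Type*} [CommRing R] (m : ℕ) (π : R) (a b : ℕ) (i : Fin m) :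
    MvPowerSeries (Fin m ⊕ Fin m) R :=
  (∑ j : Fin m, ∑ k : Fin m,
      if (j : ℕ) + (k : ℕ) = (i : ℕ) then
        (MvPowerSeries.X (Sum.inl j) : MvPowerSeries (Fin m ⊕ Fin m) R) *
          MvPowerSeries.X (Sum.inr k)
      else 0) +
  (∑ j : Fin m, ∑ k : Fin m,
      if (j : ℕ) + (k : ℕ) = m + (i : ℕ) then
        (MvPowerSeries.X (Sum.inl j) : MvPowerSeries (Fin m ⊕ Fin m) R) *
          MvPowerSeries.X (Sum.inr k)
      else 0) * MvPowerSeries.C (σ := Fin m ⊕ Fin m) (R := R) π -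
  (if (i : ℕ) = a then MvPowerSeries.C (σ := Fin m ⊕ Fin m) (R := R) (π ^ b) else 0)

/-- The semilinear Galois action on the descent ring: `σ(X_j) = ζ^{α−j}X_j`,
`σ(Y_j) = ζ^{β−j}Y_j` (exponents mod `m`), defined coefficientwise. -/
def descentAction {R : Type*} [CommRing R] (m : ℕ) (ζ : R) (α β : ℕ)
    (t : MvPowerSeries (Fin m ⊕ Fin m) R) : MvPowerSeries (Fin m ⊕ Fin m) R :=
  fun d : (Fin m ⊕ Fin m) →₀ ℕ =>
    ζ ^ (∑ v : Fin m ⊕ Fin m,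
        (Sum.elim (fun j : Fin m => (α + m - (j : ℕ)) % m)
          (fun j : Fin m => (β + m - (j : ℕ)) % m) v) * d v) *
      MvPowerSeries.coeff (R := R) d t

namespace DescentAux

open MvPowerSeries Finsupp

variable {τ : Type*} [DecidableEq τ] {R : Type*} [CommRing R]

/-- The pair map `Fin 2 → τ`. -/
def pr (u v : τ) : Fin 2 → τ := ![u, v]

@[simp] lemma pr_zero (u v : τ) : pr u v 0 = u := rfl
@[simp] lemma pr_one (u v : τ) : pr u v 1 = v := rfl

lemma pr_eq_or (u v : τ) (i : Fin 2) : pr u v i = u ∨ pr u v i = v := by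
  fin_cases i <;> simp

lemma pr_injective {u v : τ} (h : u ≠ v) : Function.Injective (pr u v) := by
  intro i j hij
  fin_cases i <;> fin_cases j <;> simp_all [pr]

/-- The embedding of exponents. -/
def M (u v : τ) (e : Fin 2 →₀ ℕ) : τ →₀ ℕ := Finsupp.mapDomain (pr u v) e

lemma M_add (u v : τ) (e₁ e₂ : Fin 2 →₀ ℕ) : M u v (e₁ + e₂) = M u v e₁ + M u v e₂ :=
  Finsupp.mapDomain_add

lemma M_injective {u v : τ} (h : u ≠ v) : Function.Injective (M u v) :=
  Finsupp.mapDomain_injective (pr_injective h)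

@[simp] lemma M_zero (u v : τ) : M u v 0 = 0 := Finsupp.mapDomain_zero

lemma M_apply_ne {u v : τ} (e : Fin 2 →₀ ℕ) {w : τ} (hwu : w ≠ u) (hwv : w ≠ v) :
    M u v e w = 0 := by
  refine Finsupp.mapDomain_notin_range _ _ ?_
  rintro ⟨i, rfl⟩
  rcases pr_eq_or u v i with h | h <;> simp_all

lemma M_apply_fst {u v : τ} (h : u ≠ v) (e : Fin 2 →₀ ℕ) : M u v e u = e 0 :=
  Finsupp.mapDomain_apply (pr_injective h) e 0

lemma M_apply_snd {u v : τ} (h : u ≠ v) (e : Fin 2 →₀ ℕ) : M u v e v = e 1 :=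
  Finsupp.mapDomain_apply (pr_injective h) e 1

/-- The contraction of exponents. -/
def N (u v : τ) (d : τ →₀ ℕ) : Fin 2 →₀ ℕ := Finsupp.single 0 (d u) + Finsupp.single 1 (d v)

lemma fin2_ext (e : Fin 2 →₀ ℕ) : Finsupp.single (0 : Fin 2) (e 0) + Finsupp.single 1 (e 1) = e := by
  ext i
  fin_cases i <;> simp [Finsupp.single_apply]

lemma N_M {u v : τ} (h : u ≠ v) (e : Fin 2 →₀ ℕ) : N u v (M u v e) = e := by
  rw [N, M_apply_fst h, M_apply_snd h, fin2_ext]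

lemma M_N {u v : τ} (h : u ≠ v) (d : τ →₀ ℕ) (hd : ∀ w, w ≠ u → w ≠ v → d w = 0) :
    M u v (N u v d) = d := by
  rw [N, M_add, M, M, Finsupp.mapDomain_single, Finsupp.mapDomain_single]
  ext w
  by_cases hwu : w = u
  · subst hwu
    simp [Finsupp.single_apply, h, (Ne.symm h)]
  · by_cases hwv : w = v
    · subst hwv
      simp [Finsupp.single_apply, h, hwu, (Ne.symm h)]
    · simp [Finsupp.single_apply, hwu, hwv, Ne.symm hwu, Ne.symm hwv, hd w hwu hwv]

/-- The function underlying the descent comparison ring hom. -/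
def phiFun (u v : τ) (f : MvPowerSeries τ R) : MvPowerSeries (Fin 2) R :=
  fun e => f (M u v e)

lemma coeff_phiFun (u v : τ) (f : MvPowerSeries τ R) (e : Fin 2 →₀ ℕ) :
    MvPowerSeries.coeff (R := R) e (phiFun u v f) = MvPowerSeries.coeff (R := R) (M u v e) f := rfl

lemma support_left {d₁ d₂ D : τ →₀ ℕ} (hd : d₁ + d₂ = D) (w : τ) (hD : D w = 0) : d₁ w = 0 := by
  have := congrArg (fun x => x w) hd
  simp only [Finsupp.add_apply] at this
  omega

lemma phiFun_mul {u v : τ} (h : u ≠ v) (f g : MvPowerSeries τ R) :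
    phiFun u v (f * g) = phiFun u v f * phiFun u v g := by
  ext e
  rw [coeff_phiFun, MvPowerSeries.coeff_mul, MvPowerSeries.coeff_mul]
  refine Finset.sum_nbij' (fun p => (N u v p.1, N u v p.2)) (fun q => (M u v q.1, M u v q.2))
    ?_ ?_ ?_ ?_ ?_
  · rintro ⟨d₁, d₂⟩ hp
    rw [Finset.HasAntidiagonal.mem_antidiagonal] at hp ⊢
    apply M_injective h
    have h1 : M u v (N u v d₁) = d₁ := by
      refine M_N h _ (fun w hwu hwv => support_left hp w (M_apply_ne _ hwu hwv))
    have h2 : M u v (N u v d₂) = d₂ := by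
      refine M_N h _ (fun w hwu hwv => support_left (by rw [add_comm] at hp; exact hp) w
        (M_apply_ne _ hwu hwv))
    rw [M_add, h1, h2, hp]
  · rintro ⟨e₁, e₂⟩ hq
    rw [Finset.HasAntidiagonal.mem_antidiagonal] at hq ⊢
    rw [← M_add, hq]
  · rintro ⟨d₁, d₂⟩ hp
    rw [Finset.HasAntidiagonal.mem_antidiagonal] at hp
    have h1 : M u v (N u v d₁) = d₁ :=
      M_N h _ (fun w hwu hwv => support_left hp w (M_apply_ne _ hwu hwv))
    have h2 : M u v (N u v d₂) = d₂ :=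
      M_N h _ (fun w hwu hwv => support_left (by rw [add_comm] at hp; exact hp) w
        (M_apply_ne _ hwu hwv))
    simp [h1, h2]
  · rintro ⟨e₁, e₂⟩ _
    simp [N_M h]
  · rintro ⟨d₁, d₂⟩ hp
    rw [Finset.HasAntidiagonal.mem_antidiagonal] at hp
    have h1 : M u v (N u v d₁) = d₁ :=
      M_N h _ (fun w hwu hwv => support_left hp w (M_apply_ne _ hwu hwv))
    have h2 : M u v (N u v d₂) = d₂ :=
      M_N h _ (fun w hwu hwv => support_left (by rw [add_comm] at hp; exact hp) w
        (M_apply_ne _ hwu hwv))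
    rw [show ((N u v d₁, N u v d₂) : _ × _).1 = N u v d₁ from rfl] at *
    rw [coeff_phiFun, coeff_phiFun, h1, h2]

lemma phiFun_one {u v : τ} (h : u ≠ v) : phiFun u v (1 : MvPowerSeries τ R) = 1 := by
  ext e
  rw [coeff_phiFun, MvPowerSeries.coeff_one, MvPowerSeries.coeff_one]
  by_cases he : e = 0
  · simp [he]
  · rw [if_neg he, if_neg]
    intro hM
    exact he (M_injective h (by rw [hM, M_zero]))

lemma phiFun_add (u v : τ) (f g : MvPowerSeries τ R) :
    phiFun u v (f + g) = phiFun u v f + phiFun u v g := rfl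

/-- The descent comparison ring hom. -/
def phiHom (u v : τ) (h : u ≠ v) : MvPowerSeries τ R →+* MvPowerSeries (Fin 2) R where
  toFun := phiFun u v
  map_one' := phiFun_one h
  map_mul' := phiFun_mul h
  map_zero' := rfl
  map_add' := phiFun_add u v

lemma phiHom_apply {u v : τ} (h : u ≠ v) (f : MvPowerSeries τ R) :
    phiHom u v h f = phiFun u v f := rfl

lemma phiHom_C {u v : τ} (h : u ≠ v) (r : R) :
    phiHom u v h (MvPowerSeries.C (σ := τ) (R := R) r) = MvPowerSeries.C (σ := Fin 2) (R := R) r := by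
  ext e
  rw [phiHom_apply, coeff_phiFun, MvPowerSeries.coeff_C, MvPowerSeries.coeff_C]
  by_cases he : e = 0
  · simp [he]
  · rw [if_neg he, if_neg]
    intro hM
    exact he (M_injective h (by rw [hM, M_zero]))

lemma phiHom_X_fst {u v : τ} (h : u ≠ v) :
    phiHom u v h (MvPowerSeries.X u : MvPowerSeries τ R) = MvPowerSeries.X 0 := by
  ext e
  rw [phiHom_apply, coeff_phiFun, MvPowerSeries.coeff_X, MvPowerSeries.coeff_X]
  have hs : Finsupp.single u 1 = M u v (Finsupp.single 0 1) := by
    rw [M, Finsupp.mapDomain_single, pr_zero]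
  rw [hs]
  by_cases he : e = Finsupp.single 0 1
  · simp [he]
  · rw [if_neg he, if_neg]
    intro hM
    exact he (M_injective h hM)

lemma phiHom_X_snd {u v : τ} (h : u ≠ v) :
    phiHom u v h (MvPowerSeries.X v : MvPowerSeries τ R) = MvPowerSeries.X 1 := by
  ext e
  rw [phiHom_apply, coeff_phiFun, MvPowerSeries.coeff_X, MvPowerSeries.coeff_X]
  have hs : Finsupp.single v 1 = M u v (Finsupp.single 1 1) := by
    rw [M, Finsupp.mapDomain_single, pr_one]
  rw [hs]
  by_cases he : e = Finsupp.single 1 1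
  · simp [he]
  · rw [if_neg he, if_neg]
    intro hM
    exact he (M_injective h hM)

lemma phiHom_X_other {u v w : τ} (h : u ≠ v) (hwu : w ≠ u) (hwv : w ≠ v) :
    phiHom u v h (MvPowerSeries.X w : MvPowerSeries τ R) = 0 := by
  ext e
  rw [phiHom_apply, coeff_phiFun, MvPowerSeries.coeff_X, map_zero]
  rw [if_neg]
  intro hM
  have : M u v e w = 1 := by rw [hM]; simp
  rw [M_apply_ne e hwu hwv] at this
  exact one_ne_zero this.symm

/-- A section of `phiFun`. -/
def psiFun (u v : τ) (f : MvPowerSeries (Fin 2) R) : MvPowerSeries τ R :=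
  fun d => if M u v (N u v d) = d then f (N u v d) else 0

lemma phiFun_psiFun {u v : τ} (h : u ≠ v) (f : MvPowerSeries (Fin 2) R) :
    phiFun u v (psiFun u v f) = f := by
  ext e
  rw [coeff_phiFun]
  show psiFun u v f (M u v e) = _
  rw [psiFun, N_M h, if_pos rfl]
  rfl

lemma phiHom_surjective {u v : τ} (h : u ≠ v) :
    Function.Surjective (phiHom u v h (R := R)) :=
  fun f => ⟨psiFun u v f, phiFun_psiFun h f⟩


open Classical in
/-- Pick a variable in `S` occurring in `d`, if any. -/
noncomputable def pick (S : Finset τ) (d : τ →₀ ℕ) : Option τ :=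
  if h : ∃ w ∈ S, d w ≠ 0 then some h.choose else none

lemma pick_eq_some {S : Finset τ} {d : τ →₀ ℕ} {w : τ} (h : pick S d = some w) :
    w ∈ S ∧ d w ≠ 0 := by
  classical
  rw [pick] at h
  split_ifs at h with h'
  · exact (Option.some.inj h) ▸ h'.choose_spec

lemma pick_exists {S : Finset τ} {d : τ →₀ ℕ} (h : ∃ w ∈ S, d w ≠ 0) :
    ∃ w, pick S d = some w := by
  classical
  rw [pick, dif_pos h]
  exact ⟨_, rfl⟩

lemma sub_single_add_cancel {d : τ →₀ ℕ} {w : τ} (hw : d w ≠ 0) :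
    (d - Finsupp.single w 1) + Finsupp.single w 1 = d := by
  ext a
  by_cases ha : a = w
  · subst ha
    simp only [Finsupp.add_apply, Finsupp.tsub_apply, Finsupp.single_eq_same]
    omega
  · simp [Finsupp.single_apply, Ne.symm ha]

/-- A power series all of whose monomials involve a variable in `S` lies in the ideal
generated by the variables in `S`. -/
theorem mem_span_X_of_vanish (S : Finset τ) (f : MvPowerSeries τ R)
    (hf : ∀ d : τ →₀ ℕ, (∀ w ∈ S, d w = 0) → MvPowerSeries.coeff (R := R) d f = 0) :
    f ∈ Ideal.span ((fun w => (MvPowerSeries.X w : MvPowerSeries τ R)) '' S) := by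
  classical
  set g : τ → MvPowerSeries τ R := fun w d' =>
    if pick S (d' + Finsupp.single w 1) = some w
      then MvPowerSeries.coeff (R := R) (d' + Finsupp.single w 1) f else 0 with hg
  have key : f = ∑ w ∈ S, MvPowerSeries.X w * g w := by
    ext d
    rw [map_sum]
    have hterm : ∀ w, MvPowerSeries.coeff (R := R) d (MvPowerSeries.X w * g w)
        = if Finsupp.single w 1 ≤ d then g w (d - Finsupp.single w 1) else 0 := by
      intro w
      rw [MvPowerSeries.X, MvPowerSeries.coeff_monomial_mul]
      split_ifs <;> simp [MvPowerSeries.coeff_apply]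
    by_cases hd : ∀ w ∈ S, d w = 0
    · rw [hf d hd, Finset.sum_eq_zero]
      intro w hw
      rw [hterm w, if_neg]
      intro hle
      have h1 := Finsupp.single_le_iff.mp hle
      rw [hd w hw] at h1
      omega
    · push_neg at hd
      obtain ⟨w0, hw0⟩ := pick_exists hd
      obtain ⟨hw0S, hw0d⟩ := pick_eq_some hw0
      rw [Finset.sum_eq_single_of_mem w0 hw0S]
      · have hle : Finsupp.single w0 1 ≤ d := Finsupp.single_le_iff.mpr (by omega)
        rw [hterm w0, if_pos hle, hg]
        simp only
        rw [sub_single_add_cancel hw0d, if_pos hw0]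
      · intro w hw hwne
        rw [hterm w]
        split_ifs with hle
        · have hdw : d w ≠ 0 := by
            have := Finsupp.single_le_iff.mp hle
            omega
          rw [hg]
          simp only
          rw [sub_single_add_cancel hdw, if_neg]
          rw [hw0]
          exact fun hc => hwne (Option.some.inj hc).symm
        · rfl
  rw [key]
  refine Ideal.sum_mem _ (fun w hw => ?_)
  exact Ideal.mul_mem_right _ _ (Ideal.subset_span ⟨w, hw, rfl⟩)

lemma mod_ne_zero {x y m : ℕ} (hm : 0 < m) (hx : x < m) (hy : y < m) (hxy : x ≠ y) :
    (x + m - y) % m ≠ 0 := by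
  rcases le_or_gt m (x + m - y) with h | h
  · rw [Nat.mod_eq_sub_mod h, Nat.mod_eq_of_lt (by omega)]
    omega
  · rw [Nat.mod_eq_of_lt h]
    omega


lemma collapse {T : Type*} [CommRing T] {n : ℕ} (A B : Fin n) (c : Fin n → Fin n → Prop)
    [∀ j k, Decidable (c j k)] (x y : T) :
    (∑ j : Fin n, ∑ k : Fin n,
        if c j k then (if j = A then x else 0) * (if k = B then y else 0) else 0)
      = if c A B then x * y else 0 := by
  rw [Finset.sum_eq_single A]
  · rw [Finset.sum_eq_single B]
    · simp
    · intro k _ hk; simp [hk]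
    · intro h; exact absurd (Finset.mem_univ B) h
  · intro j _ hj
    apply Finset.sum_eq_zero
    intro k _
    simp [hj]
  · intro h; exact absurd (Finset.mem_univ A) h

end DescentAux

/-- descent of the annulus algebra along a totally tamely ramified extension.
For `R' = R[ϖ]`, `ϖ^m = π`, `σ(ϖ) = ζϖ` with `ζ` a primitive `m`-th root of unity, write
`e = a + bm` (`0 ≤ a < m`) and let `A' = R'[[X,Y]]/(XY − ϖ^e)` with `σ(X) = ζ^α X`,
`σ(Y) = ζ^β Y`, `α + β ≡ e (mod m)`.  The ring of `σ`-coinvariants of the coefficientwise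
descent of `A'` is `R[[X_α,Y_β]]/(X_αY_β − π^b)` if `α + β = a`, and
`R[[X_α,Y_β]]/(π·X_αY_β − π^b)` if `α + β = m + a`. -/



theorem descent_of_annulus_algebra
    (R : Type*) [CommRing R] [IsDomain R] [IsDiscreteValuationRing R]
    (π : R) (hπ : Irreducible π) [IsAdicComplete (Ideal.span {π}) R]
    (m : ℕ) (hm : 0 < m) (hmu : IsUnit (m : R))
    (ζ : R) (hζ : ζ ^ m = 1) (hprim : ∀ j : ℕ, ¬ m ∣ j → IsUnit (ζ ^ j - 1))
    (e a b : ℕ) (ha : a < m) (he : e = a + b * m)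
    (α β : ℕ) (hα : α < m) (hβ : β < m) (hαβ : (α + β) % m = e % m) :
    (α + β = a →
      Nonempty
        ((MvPowerSeries (Fin m ⊕ Fin m) R ⧸
            (Ideal.span (Set.range (descentEq (R := R) m π a b)) ⊔
              Ideal.span {x : MvPowerSeries (Fin m ⊕ Fin m) R |
                ∃ t, x = t - descentAction m ζ α β t})) ≃+*
          (MvPowerSeries (Fin 2) R ⧸
            Ideal.span {(MvPowerSeries.X 0 : MvPowerSeries (Fin 2) R) * MvPowerSeries.X 1 -
              MvPowerSeries.C (σ := Fin 2) (R := R) (π ^ b)}))) ∧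
    (α + β = m + a →
      Nonempty
        ((MvPowerSeries (Fin m ⊕ Fin m) R ⧸
            (Ideal.span (Set.range (descentEq (R := R) m π a b)) ⊔
              Ideal.span {x : MvPowerSeries (Fin m ⊕ Fin m) R |
                ∃ t, x = t - descentAction m ζ α β t})) ≃+*
          (MvPowerSeries (Fin 2) R ⧸
            Ideal.span {MvPowerSeries.C (σ := Fin 2) (R := R) π *
                ((MvPowerSeries.X 0 : MvPowerSeries (Fin 2) R) * MvPowerSeries.X 1) -
              MvPowerSeries.C (σ := Fin 2) (R := R) (π ^ b)}))) := by
  classical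
  obtain ⟨A, hA⟩ : ∃ A : Fin m, (A : ℕ) = α := ⟨⟨α, hα⟩, rfl⟩
  obtain ⟨B, hB⟩ : ∃ B : Fin m, (B : ℕ) = β := ⟨⟨β, hβ⟩, rfl⟩
  set u : Fin m ⊕ Fin m := Sum.inl A with hu
  set v : Fin m ⊕ Fin m := Sum.inr B with hv
  have huv : u ≠ v := by simp [hu, hv]
  set Φ : MvPowerSeries (Fin m ⊕ Fin m) R →+* MvPowerSeries (Fin 2) R :=
    DescentAux.phiHom u v huv with hΦ
  set wt : Fin m ⊕ Fin m → ℕ := Sum.elim (fun j : Fin m => (α + m - (j : ℕ)) % m)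
      (fun j : Fin m => (β + m - (j : ℕ)) % m) with hwt
  have hwtu : wt u = 0 := by
    show (α + m - (A : ℕ)) % m = 0
    rw [hA, show α + m - α = m by omega, Nat.mod_self]
  have hwtv : wt v = 0 := by
    show (β + m - (B : ℕ)) % m = 0
    rw [hB, show β + m - β = m by omega, Nat.mod_self]
  have hcoeffσ : ∀ (t : MvPowerSeries (Fin m ⊕ Fin m) R) (D : (Fin m ⊕ Fin m) →₀ ℕ),
      MvPowerSeries.coeff (R := R) D (descentAction m ζ α β t) =
        ζ ^ (∑ w : Fin m ⊕ Fin m, wt w * D w) * MvPowerSeries.coeff (R := R) D t := fun _ _ => rfl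
  -- (B) : coinvariance generators are killed by Φ
  have hJker : ∀ t : MvPowerSeries (Fin m ⊕ Fin m) R,
      Φ (t - descentAction m ζ α β t) = 0 := by
    intro t
    rw [map_sub, sub_eq_zero]
    ext e
    rw [hΦ, DescentAux.phiHom_apply, DescentAux.phiHom_apply, DescentAux.coeff_phiFun,
      DescentAux.coeff_phiFun, hcoeffσ]
    have hE : (∑ w : Fin m ⊕ Fin m, wt w * (DescentAux.M u v e) w) = 0 := by
      apply Finset.sum_eq_zero
      intro w _
      by_cases hwu' : w = u
      · rw [hwu', hwtu, zero_mul]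
      · by_cases hwv' : w = v
        · rw [hwv', hwtv, zero_mul]
        · rw [DescentAux.M_apply_ne e hwu' hwv', mul_zero]
    rw [hE, pow_zero, one_mul]
  -- (C) : the extra variables lie in the coinvariance ideal
  have hXJ : ∀ w : Fin m ⊕ Fin m, w ≠ u → w ≠ v →
      (MvPowerSeries.X w : MvPowerSeries (Fin m ⊕ Fin m) R) ∈
        Ideal.span {x : MvPowerSeries (Fin m ⊕ Fin m) R |
          ∃ t, x = t - descentAction m ζ α β t} := by
    intro w hwu' hwv'
    have hwt0 : ¬ m ∣ wt w := by
      have hne : wt w ≠ 0 := by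
        cases w with
        | inl j =>
          have hj : (j : ℕ) ≠ α := by
            intro hc
            exact hwu' (by rw [hu, show j = A from Fin.ext (by rw [hA, hc])])
          exact DescentAux.mod_ne_zero hm hα j.isLt (Ne.symm hj)
        | inr j =>
          have hj : (j : ℕ) ≠ β := by
            intro hc
            exact hwv' (by rw [hv, show j = B from Fin.ext (by rw [hB, hc])])
          exact DescentAux.mod_ne_zero hm hβ j.isLt (Ne.symm hj)
      intro hdvd
      have hlt : wt w < m := by
        cases w with
        | inl j => exact Nat.mod_lt _ hm
        | inr j => exact Nat.mod_lt _ hm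
      exact hne (Nat.eq_zero_of_dvd_of_lt hdvd hlt)
    have hunit : IsUnit ((MvPowerSeries.C (σ := Fin m ⊕ Fin m) (R := R)) (1 - ζ ^ wt w)) := by
      have h1 : IsUnit (ζ ^ wt w - 1) := hprim _ hwt0
      have h2 : IsUnit (1 - ζ ^ wt w) := by
        have := h1.neg
        rwa [neg_sub] at this
      exact h2.map (MvPowerSeries.C (σ := Fin m ⊕ Fin m) (R := R))
    have heq : (MvPowerSeries.C (σ := Fin m ⊕ Fin m) (R := R)) (1 - ζ ^ wt w) * MvPowerSeries.X w
        = MvPowerSeries.X w - descentAction m ζ α β (MvPowerSeries.X w) := by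
      ext d
      rw [MvPowerSeries.coeff_C_mul, map_sub, hcoeffσ, MvPowerSeries.coeff_X]
      by_cases hd : d = Finsupp.single w 1
      · subst hd
        rw [if_pos rfl]
        have hE : (∑ w' : Fin m ⊕ Fin m, wt w' * (Finsupp.single w 1) w') = wt w := by
          rw [Finset.sum_eq_single w]
          · rw [Finsupp.single_eq_same, mul_one]
          · intro w' _ hw'
            rw [Finsupp.single_apply, if_neg (Ne.symm hw'), mul_zero]
          · intro hmem
            exact absurd (Finset.mem_univ w) hmem
        rw [hE]
        ring
      · rw [if_neg hd]
        ring
    have hmem0 : MvPowerSeries.X w - descentAction m ζ α β (MvPowerSeries.X w) ∈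
        Ideal.span {x : MvPowerSeries (Fin m ⊕ Fin m) R |
          ∃ t, x = t - descentAction m ζ α β t} :=
      Ideal.subset_span ⟨MvPowerSeries.X w, rfl⟩
    rw [← heq] at hmem0
    obtain ⟨cu, hcu⟩ := hunit
    rw [← hcu] at hmem0
    have hmul := (Ideal.span {x : MvPowerSeries (Fin m ⊕ Fin m) R |
      ∃ t, x = t - descentAction m ζ α β t}).mul_mem_left (↑cu⁻¹) hmem0
    rwa [← mul_assoc, Units.inv_mul, one_mul] at hmul
  -- (D) : the kernel of Φ is contained in the coinvariance ideal
  have hkerJ : ∀ x : MvPowerSeries (Fin m ⊕ Fin m) R, Φ x = 0 →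
      x ∈ Ideal.span {x : MvPowerSeries (Fin m ⊕ Fin m) R |
        ∃ t, x = t - descentAction m ζ α β t} := by
    intro x hx
    have hxI : x ∈ Ideal.span ((fun w => (MvPowerSeries.X w : MvPowerSeries (Fin m ⊕ Fin m) R)) ''
        (Finset.univ.filter (fun w : Fin m ⊕ Fin m => w ≠ u ∧ w ≠ v))) := by
      apply DescentAux.mem_span_X_of_vanish
      intro d hd
      have hd' : ∀ w', w' ≠ u → w' ≠ v → d w' = 0 := fun w' h1 h2 =>
        hd w' (by simp [h1, h2])
      have hMN : DescentAux.M u v (DescentAux.N u v d) = d := DescentAux.M_N huv d hd'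
      have hc : MvPowerSeries.coeff (R := R) (DescentAux.N u v d) (Φ x) = 0 := by
        rw [hx, map_zero]
      rwa [hΦ, DescentAux.phiHom_apply, DescentAux.coeff_phiFun, hMN] at hc
    refine Ideal.span_le.mpr ?_ hxI
    rintro y ⟨w, hw, rfl⟩
    simp only [Finset.coe_filter, Finset.mem_univ, true_and, Set.mem_setOf_eq] at hw
    exact hXJ w hw.1 hw.2
  -- (A) : the image of the descent equations under Φ
  have hΦX : ∀ j : Fin m, Φ (MvPowerSeries.X (Sum.inl j)) =
      (if j = A then MvPowerSeries.X 0 else 0) := by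
    intro j
    by_cases hj : j = A
    · rw [if_pos hj, hj]
      exact DescentAux.phiHom_X_fst huv
    · rw [if_neg hj]
      refine DescentAux.phiHom_X_other huv ?_ ?_
      · rw [hu]
        exact fun hc => hj (Sum.inl_injective hc)
      · rw [hv]
        exact Sum.inl_ne_inr
  have hΦY : ∀ k : Fin m, Φ (MvPowerSeries.X (Sum.inr k)) =
      (if k = B then MvPowerSeries.X 1 else 0) := by
    intro k
    by_cases hk : k = B
    · rw [if_pos hk, hk]
      exact DescentAux.phiHom_X_snd huv
    · rw [if_neg hk]
      refine DescentAux.phiHom_X_other huv ?_ ?_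
      · rw [hu]
        exact Sum.inr_ne_inl
      · rw [hv]
        exact fun hc => hk (Sum.inr_injective hc)
  have hΦeq : ∀ i : Fin m, Φ (descentEq m π a b i) =
      (if α + β = (i : ℕ) then
          (MvPowerSeries.X 0 : MvPowerSeries (Fin 2) R) * MvPowerSeries.X 1 else 0) +
      (if α + β = m + (i : ℕ) then
          (MvPowerSeries.X 0 : MvPowerSeries (Fin 2) R) * MvPowerSeries.X 1 else 0) *
        MvPowerSeries.C (σ := Fin 2) (R := R) π -
      (if (i : ℕ) = a then MvPowerSeries.C (σ := Fin 2) (R := R) (π ^ b) else 0) := by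
    intro i
    have hsum : ∀ c : Fin m → Fin m → Prop, ∀ _ : ∀ j k, Decidable (c j k),
        Φ (∑ j : Fin m, ∑ k : Fin m, if c j k then
            (MvPowerSeries.X (Sum.inl j) : MvPowerSeries (Fin m ⊕ Fin m) R) *
              MvPowerSeries.X (Sum.inr k) else 0)
          = if c A B then
              (MvPowerSeries.X 0 : MvPowerSeries (Fin 2) R) * MvPowerSeries.X 1 else 0 := by
      intro c _
      rw [map_sum]
      rw [Finset.sum_congr rfl (fun j _ => map_sum Φ _ _)]
      rw [Finset.sum_congr rfl (fun j _ => Finset.sum_congr rfl (fun k _ => by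
        rw [apply_ite Φ, map_mul, map_zero, hΦX, hΦY]))]
      exact DescentAux.collapse A B c _ _
    rw [descentEq, map_sub, map_add, map_mul]
    rw [hsum _ (fun j k => inferInstance), hsum _ (fun j k => inferInstance)]
    rw [hΦ, DescentAux.phiHom_C huv, apply_ite (DescentAux.phiHom u v huv),
      DescentAux.phiHom_C huv, map_zero]
    rw [hA, hB]
  -- the common part of both cases
  have main : ∀ g' : MvPowerSeries (Fin 2) R,
      (∀ i : Fin m, Φ (descentEq m π a b i) = if (i : ℕ) = a then g' else 0) →
      Nonempty ((MvPowerSeries (Fin m ⊕ Fin m) R ⧸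
            (Ideal.span (Set.range (descentEq (R := R) m π a b)) ⊔
              Ideal.span {x : MvPowerSeries (Fin m ⊕ Fin m) R |
                ∃ t, x = t - descentAction m ζ α β t})) ≃+*
          MvPowerSeries (Fin 2) R ⧸ Ideal.span {g'}) := by
    intro g' hval
    set φ := (Ideal.Quotient.mk (Ideal.span {g'})).comp Φ with hφ
    have hsurj : Function.Surjective φ := by
      intro z
      obtain ⟨y, hy⟩ := Ideal.Quotient.mk_surjective z
      obtain ⟨x, hx⟩ := DescentAux.phiHom_surjective huv (R := R) y
      exact ⟨x, by rw [hφ, RingHom.comp_apply, hx, hy]⟩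
    have hker : RingHom.ker φ = Ideal.span (Set.range (descentEq (R := R) m π a b)) ⊔
        Ideal.span {x : MvPowerSeries (Fin m ⊕ Fin m) R |
          ∃ t, x = t - descentAction m ζ α β t} := by
      apply le_antisymm
      · intro x hx
        rw [RingHom.mem_ker, hφ, RingHom.comp_apply, Ideal.Quotient.eq_zero_iff_mem,
          Ideal.mem_span_singleton'] at hx
        obtain ⟨c, hc⟩ := hx
        have hfa : Φ (descentEq m π a b ⟨a, ha⟩) = g' := by
          have := hval ⟨a, ha⟩
          rwa [if_pos rfl] at this
        have hΦy : Φ (DescentAux.psiFun u v c * descentEq m π a b ⟨a, ha⟩) = c * g' := by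
          rw [map_mul, hfa, hΦ, DescentAux.phiHom_apply, DescentAux.phiFun_psiFun huv]
        have h1 : x - DescentAux.psiFun u v c * descentEq m π a b ⟨a, ha⟩ ∈
            Ideal.span {x : MvPowerSeries (Fin m ⊕ Fin m) R |
              ∃ t, x = t - descentAction m ζ α β t} := by
          apply hkerJ
          rw [map_sub, hΦy, hc, sub_self]
        have h2 : DescentAux.psiFun u v c * descentEq m π a b ⟨a, ha⟩ ∈
            Ideal.span (Set.range (descentEq (R := R) m π a b)) ⊔
              Ideal.span {x : MvPowerSeries (Fin m ⊕ Fin m) R |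
                ∃ t, x = t - descentAction m ζ α β t} := by
          apply Ideal.mem_sup_left
          exact Ideal.mul_mem_left _ _ (Ideal.subset_span ⟨⟨a, ha⟩, rfl⟩)
        have h3 := add_mem (Ideal.mem_sup_right h1) h2
        simpa using h3
      · rw [sup_le_iff]
        constructor
        · rw [Ideal.span_le]
          rintro x ⟨i, rfl⟩
          rw [SetLike.mem_coe, RingHom.mem_ker, hφ, RingHom.comp_apply,
            Ideal.Quotient.eq_zero_iff_mem, hval i]
          split_ifs
          · exact Ideal.subset_span rfl
          · exact Ideal.zero_mem _
        · rw [Ideal.span_le]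
          rintro x ⟨t, rfl⟩
          rw [SetLike.mem_coe, RingHom.mem_ker, hφ, RingHom.comp_apply, hJker t, map_zero]
    exact ⟨(Ideal.quotEquivOfEq hker.symm).trans (RingHom.quotientKerEquivOfSurjective hsurj)⟩
  constructor
  · intro hcase
    refine main _ (fun i => ?_)
    rw [hΦeq i]
    have hilt : (i : ℕ) < m := i.isLt
    by_cases hi : (i : ℕ) = a
    · rw [if_pos hi, if_pos (show α + β = (i : ℕ) by omega),
        if_neg (show ¬ α + β = m + (i : ℕ) by omega), if_pos hi]
      ring
    · rw [if_neg hi, if_neg (show ¬ α + β = (i : ℕ) by omega),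
        if_neg (show ¬ α + β = m + (i : ℕ) by omega), if_neg hi]
      ring
  · intro hcase
    refine main _ (fun i => ?_)
    rw [hΦeq i]
    have hilt : (i : ℕ) < m := i.isLt
    by_cases hi : (i : ℕ) = a
    · rw [if_pos hi, if_neg (show ¬ α + β = (i : ℕ) by omega),
        if_pos (show α + β = m + (i : ℕ) by omega), if_pos hi]
      ring
    · rw [if_neg hi, if_neg (show ¬ α + β = (i : ℕ) by omega),
        if_neg (show ¬ α + β = m + (i : ℕ) by omega), if_neg hi]
      ring
end
end

section
/- A bounded analytic function on a closed annulus has only finitely many zeros: let R be a complete DVR with uniformizer π, K = Frac(R) with algebraic closure K^alg, e > 0, and let f = Σ_{i∈ℤ} a_i X^i be a nonzero element of A = R{X,Y}/(XY − π^e) written as a Laurent series in X. Then the set { x ∈ K^alg : |π|^e ≤ |x| ≤ 1 and Σ a_i x^i = 0 } is finite. -/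
noncomputable section

open Filter Topology

namespace AnnulusProof


variable {L : Type*} [NormedField L] [IsUltrametricDist L]

lemma nsub_le_max (x y : L) : ‖x - y‖ ≤ max ‖x‖ ‖y‖ := by
  rw [sub_eq_add_neg]
  simpa using IsUltrametricDist.norm_add_le_max x (-y)

/-- if `‖y‖ < ‖x‖` then `‖x - y‖ = ‖x‖` -/
lemma nsub_eq_left {x y : L} (h : ‖y‖ < ‖x‖) : ‖x - y‖ = ‖x‖ := by
  refine le_antisymm ((nsub_le_max x y).trans (max_le le_rfl h.le)) ?_
  have : ‖x‖ ≤ max ‖x - y‖ ‖y‖ := by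
    simpa [sub_add_cancel] using IsUltrametricDist.norm_add_le_max (x - y) y
  rcases max_cases ‖x - y‖ ‖y‖ with ⟨he, _⟩ | ⟨he, _⟩
  · rwa [he] at this
  · rw [he] at this; exact absurd this (not_le.mpr h)

lemma nsub_eq_right {x y : L} (h : ‖x‖ < ‖y‖) : ‖x - y‖ = ‖y‖ := by
  rw [← norm_neg, neg_sub]; exact nsub_eq_left h

lemma summable_of_norm_tendsto_cofinite [CompleteSpace L] {ι : Type*} {f : ι → L}
    (h : Tendsto (fun i => ‖f i‖) cofinite (𝓝 0)) : Summable f :=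
  NonarchimedeanAddGroup.summable_of_tendsto_cofinite_zero
    (tendsto_zero_iff_norm_tendsto_zero.mpr h)

lemma norm_tsum_le_of_le {ι : Type*} {f : ι → L} {C : ℝ} (hC : 0 ≤ C)
    (h : ∀ i, ‖f i‖ ≤ C) : ‖∑' i, f i‖ ≤ C :=
  IsUltrametricDist.norm_tsum_le_of_forall_le_of_nonneg hC h

/-- a sum with a unique term of maximal norm is nonzero -/
lemma tsum_ne_zero_of_unique_max [CompleteSpace L] {f : ℤ → L} (hf : Summable f) (i0 : ℤ)
    (h0 : f i0 ≠ 0) (hlt : ∀ j, j ≠ i0 → ‖f j‖ < ‖f i0‖) : ∑' i, f i ≠ 0 := by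
  set ε := ‖f i0‖ with hε
  have hε0 : 0 < ε := norm_pos_iff.mpr h0
  have hcof : Tendsto f cofinite (𝓝 0) := hf.tendsto_cofinite_zero
  have hev : ∀ᶠ j in cofinite, ‖f j‖ < ε / 2 := by
    have := tendsto_zero_iff_norm_tendsto_zero.mp hcof
    exact (this.eventually_lt_const (by linarith : (0:ℝ) < ε / 2))
  have hfin : {j : ℤ | ¬ ‖f j‖ < ε / 2}.Finite := eventually_cofinite.mp hev
  classical
  set T : Finset ℤ := hfin.toFinset.erase i0 with hT
  set F : Finset ℝ := insert (ε / 2) (T.image fun j => ‖f j‖) with hF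
  have hFne : F.Nonempty := ⟨ε / 2, Finset.mem_insert_self _ _⟩
  set δ := F.max' hFne with hδ
  have hδ2 : ε / 2 ≤ δ := F.le_max' _ (Finset.mem_insert_self _ _)
  have hδ0 : 0 ≤ δ := le_trans (by linarith) hδ2
  have hδε : δ < ε := by
    apply (F.max'_lt_iff hFne).mpr
    intro y hy
    rcases Finset.mem_insert.mp hy with rfl | hy
    · linarith
    · obtain ⟨j, hj, rfl⟩ := Finset.mem_image.mp hy
      exact hlt j (Finset.ne_of_mem_erase hj)
  have hbound : ∀ j, j ≠ i0 → ‖f j‖ ≤ δ := by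
    intro j hj
    by_cases hjT : j ∈ T
    · exact F.le_max' _ (Finset.mem_insert_of_mem (Finset.mem_image_of_mem _ hjT))
    · have : ‖f j‖ < ε / 2 := by
        by_contra hcon
        exact hjT (Finset.mem_erase.mpr ⟨hj, hfin.mem_toFinset.mpr hcon⟩)
      linarith
  intro hzero
  have hsplit : ∑' i, f i = f i0 + ∑' i, if i = i0 then 0 else f i :=
    Summable.tsum_eq_add_tsum_ite hf i0
  have htail : ‖∑' i, if i = i0 then 0 else f i‖ ≤ δ := by
    apply norm_tsum_le_of_le hδ0
    intro i
    by_cases hi : i = i0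
    · simp [hi, hδ0]
    · simpa [hi] using hbound i hi
  rw [hzero] at hsplit
  have heq : f i0 = -∑' i, if i = i0 then 0 else f i :=
    eq_neg_of_add_eq_zero_left hsplit.symm
  have : ε ≤ δ := by
    rw [hε, heq, norm_neg]; exact htail
  linarith



/-- `i` is the largest index at which `g` attains its (global) maximum. -/
def TopDom (g : ℤ → ℝ) (i : ℤ) : Prop := (∀ j, g j ≤ g i) ∧ ∀ j, i < j → g j < g i

/-- `i` is the smallest index at which `g` attains its (global) maximum. -/
def BotDom (g : ℤ → ℝ) (i : ℤ) : Prop := (∀ j, g j ≤ g i) ∧ ∀ j, j < i → g j < g i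

lemma topDom_unique {g : ℤ → ℝ} {i i' : ℤ} (h : TopDom g i) (h' : TopDom g i') : i = i' := by
  rcases lt_trichotomy i i' with hl | he | hl
  · exact absurd (h'.1 i) (not_le.mpr (h.2 i' hl))
  · exact he
  · exact absurd (h.1 i') (not_le.mpr (h'.2 i hl))

lemma botDom_unique {g : ℤ → ℝ} {i i' : ℤ} (h : BotDom g i) (h' : BotDom g i') : i = i' := by
  rcases lt_trichotomy i i' with hl | he | hl
  · exact absurd (h.1 i') (not_le.mpr (h'.2 i hl))
  · exact he
  · exact absurd (h'.1 i) (not_le.mpr (h.2 i' hl))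

lemma exists_topDom {g : ℤ → ℝ} (hg : Tendsto g cofinite (𝓝 0)) {i₁ : ℤ} (hpos : 0 < g i₁) :
    ∃ i, TopDom g i := by
  classical
  have hev : ∀ᶠ j in cofinite, g j < g i₁ := by
    have : ∀ᶠ j in cofinite, |g j| < g i₁ := by
      have := Metric.tendsto_nhds.mp hg (g i₁) hpos
      simpa [Real.dist_eq] using this
    exact this.mono fun j hj => lt_of_le_of_lt (le_abs_self _) hj
  have hfin : {j : ℤ | ¬ g j < g i₁}.Finite := eventually_cofinite.mp hev
  set Tf : Finset ℤ := hfin.toFinset with hTf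
  have hi₁ : i₁ ∈ Tf := hfin.mem_toFinset.mpr (by simp)
  obtain ⟨jm, hjm, hmax⟩ := Tf.exists_max_image g ⟨i₁, hi₁⟩
  -- global maximality of `g jm`
  have hglob : ∀ j, g j ≤ g jm := by
    intro j
    by_cases hj : j ∈ Tf
    · exact hmax j hj
    · have : g j < g i₁ := by
        by_contra hc
        exact hj (hfin.mem_toFinset.mpr hc)
      exact this.le.trans (hmax i₁ hi₁)
  -- the argmax set as a finset
  set A : Finset ℤ := Tf.filter (fun j => g jm ≤ g j) with hA
  have hAne : A.Nonempty := ⟨jm, Finset.mem_filter.mpr ⟨hjm, le_rfl⟩⟩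
  refine ⟨A.max' hAne, ?_, ?_⟩
  · intro j
    have hm : A.max' hAne ∈ A := A.max'_mem hAne
    have := (Finset.mem_filter.mp hm).2
    exact (hglob j).trans this
  · intro j hj
    by_contra hc
    push_neg at hc
    have hmA : A.max' hAne ∈ A := A.max'_mem hAne
    have hval : g jm ≤ g (A.max' hAne) := (Finset.mem_filter.mp hmA).2
    have hjval : g jm ≤ g j := hval.trans hc
    have hjT : j ∈ Tf := by
      apply hfin.mem_toFinset.mpr
      simp only [Set.mem_setOf_eq, not_lt]
      exact le_trans (hmax i₁ hi₁) hjval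
    have hjA : j ∈ A := Finset.mem_filter.mpr ⟨hjT, hjval⟩
    exact absurd (A.le_max' j hjA) (not_le.mpr hj)

lemma exists_botDom {g : ℤ → ℝ} (hg : Tendsto g cofinite (𝓝 0)) {i₁ : ℤ} (hpos : 0 < g i₁) :
    ∃ i, BotDom g i := by
  have hg' : Tendsto (fun j => g (-j)) cofinite (𝓝 0) :=
    hg.comp (Function.Injective.tendsto_cofinite neg_injective)
  obtain ⟨i, hi⟩ := exists_topDom hg' (i₁ := -i₁) (by simpa using hpos)
  refine ⟨-i, ?_, ?_⟩
  · intro j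
    simpa using hi.1 (-j)
  · intro j hj
    have := hi.2 (-j) (by omega)
    simpa using this
  

variable {L : Type*} [NormedField L] [IsUltrametricDist L]

/-- multiplying by `(X - z)` shifts the largest dominant index at radius 1 up by one -/
lemma topDom_step {b' : ℤ → L} {z : L} (hz : ‖z‖ ≤ 1) {i0 : ℤ}
    (h : TopDom (fun i => ‖b' i‖) i0) :
    TopDom (fun i => ‖b' (i - 1) - z * b' i‖) (i0 + 1) := by
  set S := ‖b' i0‖ with hS
  have hub : ∀ i, ‖b' (i - 1) - z * b' i‖ ≤ S := by
    intro i
    refine (nsub_le_max _ _).trans (max_le (h.1 _) ?_)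
    rw [norm_mul]
    calc ‖z‖ * ‖b' i‖ ≤ 1 * ‖b' i‖ := by
          apply mul_le_mul_of_nonneg_right hz (norm_nonneg _)
      _ = ‖b' i‖ := one_mul _
      _ ≤ S := h.1 _
  have hval : ‖b' (i0 + 1 - 1) - z * b' (i0 + 1)‖ = S := by
    have h1 : ‖z * b' (i0 + 1)‖ < ‖b' (i0 + 1 - 1)‖ := by
      rw [norm_mul]
      have h2 : ‖b' (i0 + 1)‖ < S := h.2 (i0 + 1) (by omega)
      have h3 : (i0 + 1 - 1 : ℤ) = i0 := by omega
      rw [h3]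
      calc ‖z‖ * ‖b' (i0 + 1)‖ ≤ 1 * ‖b' (i0 + 1)‖ :=
            mul_le_mul_of_nonneg_right hz (norm_nonneg _)
        _ = ‖b' (i0 + 1)‖ := one_mul _
        _ < S := h2
    rw [nsub_eq_left h1]
    have h4 : (i0 + 1 - 1 : ℤ) = i0 := by omega
    rw [h4]
  constructor
  · intro j
    show ‖b' (j - 1) - z * b' j‖ ≤ ‖b' (i0 + 1 - 1) - z * b' (i0 + 1)‖
    rw [hval]; exact hub j
  · intro j hj
    show ‖b' (j - 1) - z * b' j‖ < ‖b' (i0 + 1 - 1) - z * b' (i0 + 1)‖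
    rw [hval]
    have hj1 : i0 < j - 1 := by omega
    have hj2 : i0 < j := by omega
    refine lt_of_le_of_lt (nsub_le_max _ _) (max_lt (h.2 _ hj1) ?_)
    rw [norm_mul]
    calc ‖z‖ * ‖b' j‖ ≤ 1 * ‖b' j‖ := mul_le_mul_of_nonneg_right hz (norm_nonneg _)
      _ = ‖b' j‖ := one_mul _
      _ < S := h.2 _ hj2

/-- multiplying by `(X - z)` keeps the smallest dominant index at radius `u` -/
lemma botDom_step {u : ℝ} (hu0 : 0 < u) {b' : ℤ → L} {z : L} (hz : u ≤ ‖z‖) {j0 : ℤ}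
    (h : BotDom (fun i => ‖b' i‖ * u ^ i) j0) :
    BotDom (fun i => ‖b' (i - 1) - z * b' i‖ * u ^ i) j0 := by
  set w : ℤ → ℝ := fun i => ‖b' i‖ * u ^ i with hw
  set T := w j0 with hT
  have hz0 : 0 < ‖z‖ := lt_of_lt_of_le hu0 hz
  have hwnn : ∀ i, 0 ≤ w i := fun i => mul_nonneg (norm_nonneg _) (zpow_pos hu0 i).le
  have hT0 : 0 ≤ T := hwnn j0
  have hup : ∀ i, ‖b' (i - 1)‖ * u ^ i = u * w (i - 1) := by
    intro i
    rw [hw]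
    have : (u : ℝ) ^ i = u ^ (i - 1 : ℤ) * u := by
      rw [← zpow_add_one₀ hu0.ne']; congr 1; omega
    rw [this]; ring
  have hub : ∀ i, ‖b' (i - 1) - z * b' i‖ * u ^ i ≤ ‖z‖ * T := by
    intro i
    have h1 : ‖b' (i - 1) - z * b' i‖ ≤ max ‖b' (i - 1)‖ (‖z‖ * ‖b' i‖) := by
      simpa [norm_mul] using nsub_le_max (b' (i - 1)) (z * b' i)
    calc ‖b' (i - 1) - z * b' i‖ * u ^ i
        ≤ max ‖b' (i - 1)‖ (‖z‖ * ‖b' i‖) * u ^ i :=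
          mul_le_mul_of_nonneg_right h1 (zpow_pos hu0 i).le
      _ = max (‖b' (i - 1)‖ * u ^ i) (‖z‖ * ‖b' i‖ * u ^ i) :=
          max_mul_of_nonneg _ _ (zpow_pos hu0 i).le
      _ ≤ ‖z‖ * T := by
          apply max_le
          · rw [hup i]
            calc u * w (i - 1) ≤ u * T := mul_le_mul_of_nonneg_left (h.1 _) hu0.le
              _ ≤ ‖z‖ * T := mul_le_mul_of_nonneg_right hz hT0
          · rw [mul_assoc]
            exact mul_le_mul_of_nonneg_left (h.1 _) hz0.le
  have hval : ‖b' (j0 - 1) - z * b' j0‖ * u ^ j0 = ‖z‖ * T := by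
    have hTpos : 0 < T := lt_of_le_of_lt (hwnn (j0 - 1)) (h.2 (j0 - 1) (by omega))
    have h1 : ‖b' (j0 - 1)‖ < ‖z * b' j0‖ := by
      rw [norm_mul]
      have e1 : ‖b' (j0 - 1)‖ * u ^ j0 = u * w (j0 - 1) := hup j0
      have e2 : w (j0 - 1) < T := h.2 _ (by omega)
      -- multiply out: compare after multiplying by u ^ j0 > 0
      have hpow : (0:ℝ) < u ^ j0 := zpow_pos hu0 _
      rw [← mul_lt_mul_iff_of_pos_right hpow, e1]
      calc u * w (j0 - 1) < u * T := by
            apply mul_lt_mul_of_pos_left e2 hu0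
        _ ≤ ‖z‖ * T := mul_le_mul_of_nonneg_right hz hT0
        _ = ‖z‖ * ‖b' j0‖ * u ^ j0 := by rw [hT, hw]; ring
    rw [nsub_eq_right h1, norm_mul, hT, hw]; ring
  constructor
  · intro j
    show ‖b' (j - 1) - z * b' j‖ * u ^ j ≤ ‖b' (j0 - 1) - z * b' j0‖ * u ^ j0
    rw [hval]; exact hub j
  · intro j hj
    show ‖b' (j - 1) - z * b' j‖ * u ^ j < ‖b' (j0 - 1) - z * b' j0‖ * u ^ j0
    rw [hval]
    have h1 : ‖b' (j - 1) - z * b' j‖ * u ^ j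
        ≤ max (‖b' (j - 1)‖ * u ^ j) (‖z‖ * ‖b' j‖ * u ^ j) := by
      refine le_trans (mul_le_mul_of_nonneg_right ?_ (zpow_pos hu0 j).le)
        (le_of_eq (max_mul_of_nonneg _ _ (zpow_pos hu0 j).le))
      simpa [norm_mul] using nsub_le_max (b' (j - 1)) (z * b' j)
    have hTpos : 0 < T := lt_of_le_of_lt (hwnn (j - 1)) (h.2 (j - 1) (by omega))
    refine lt_of_le_of_lt h1 (max_lt ?_ ?_)
    · rw [hup j]
      calc u * w (j - 1) < u * T := mul_lt_mul_of_pos_left (h.2 _ (by omega)) hu0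
        _ ≤ ‖z‖ * T := mul_le_mul_of_nonneg_right hz hT0
    · rw [mul_assoc]
      exact mul_lt_mul_of_pos_left (h.2 _ hj) hz0

lemma botDom_le_topDom {u : ℝ} (hu0 : 0 < u) (hu1 : u < 1) {g : ℤ → ℝ}
    (hg : ∀ i, 0 ≤ g i) {i0 j0 : ℤ}
    (ht : TopDom g i0) (hb : BotDom (fun i => g i * u ^ i) j0) (hpos : 0 < g i0) :
    j0 ≤ i0 := by
  by_contra hc
  push_neg at hc
  have h1 : g i0 * u ^ i0 ≤ g j0 * u ^ j0 := hb.1 i0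
  have h2 : g j0 ≤ g i0 := ht.1 j0
  have h3 : (u : ℝ) ^ j0 < u ^ i0 := zpow_lt_zpow_right_of_lt_one₀ hu0 hu1 hc
  have : g j0 * u ^ j0 < g i0 * u ^ i0 :=
    lt_of_le_of_lt (mul_le_mul_of_nonneg_right h2 (zpow_pos hu0 j0).le)
      (mul_lt_mul_of_pos_left h3 hpos)
  linarith

/-- summability on the closed annulus from the two boundary decay conditions -/
lemma summable_on_annulus [CompleteSpace L] {u : ℝ} (hu0 : 0 < u) {b : ℤ → L}
    (hb1 : Tendsto (fun i => ‖b i‖) cofinite (𝓝 0))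
    (hb2 : Tendsto (fun i => ‖b i‖ * u ^ i) cofinite (𝓝 0))
    {x : L} (hx1 : u ≤ ‖x‖) (hx2 : ‖x‖ ≤ 1) :
    Summable fun i : ℤ => b i * x ^ i := by
  apply summable_of_norm_tendsto_cofinite
  have hx0 : (0:ℝ) < ‖x‖ := lt_of_lt_of_le hu0 hx1
  have hbd : ∀ i : ℤ, ‖b i * x ^ i‖ ≤ max ‖b i‖ (‖b i‖ * u ^ i) := by
    intro i
    rw [norm_mul, norm_zpow]
    rcases le_or_gt 0 i with hi | hi
    · refine le_max_of_le_left ?_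
      calc ‖b i‖ * ‖x‖ ^ i ≤ ‖b i‖ * 1 :=
            mul_le_mul_of_nonneg_left (zpow_le_one₀ hx0 hx2 hi) (norm_nonneg _)
        _ = ‖b i‖ := mul_one _
    · refine le_max_of_le_right ?_
      have : ‖x‖ ^ i ≤ u ^ i := by
        have h1 : ∀ (a : ℝ), 0 < a → a ^ i = (a ^ (-i).toNat)⁻¹ := by
          intro a ha
          rw [← zpow_natCast a, Int.toNat_of_nonneg (by omega : (0:ℤ) ≤ -i), zpow_neg, inv_inv]
        rw [h1 _ hx0, h1 _ hu0]
        apply inv_anti₀ (pow_pos hu0 _)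
        exact pow_le_pow_left₀ hu0.le hx1 _
      exact mul_le_mul_of_nonneg_left this (norm_nonneg _)
  have hmax : Tendsto (fun i : ℤ => max ‖b i‖ (‖b i‖ * u ^ i)) cofinite (𝓝 0) := by
    have := hb1.max hb2
    simpa using this
  exact squeeze_zero (fun i => norm_nonneg _) hbd hmax

/-- base case: a series with a single dominant exponent on the whole annulus has no zeros -/
lemma no_zero_of_eq_dom [CompleteSpace L] {u : ℝ} (hu0 : 0 < u) {b : ℤ → L} {d : ℤ}
    (ht : TopDom (fun i => ‖b i‖) d) (hb : BotDom (fun i => ‖b i‖ * u ^ i) d)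
    (hbd : b d ≠ 0) {x : L} (hx1 : u ≤ ‖x‖) (hx2 : ‖x‖ ≤ 1)
    (hsx : Summable fun i : ℤ => b i * x ^ i) : ∑' i : ℤ, b i * x ^ i ≠ 0 := by
  have hx0 : (0:ℝ) < ‖x‖ := lt_of_lt_of_le hu0 hx1
  have hxne : x ≠ 0 := norm_pos_iff.mp hx0
  apply tsum_ne_zero_of_unique_max hsx d
  · exact mul_ne_zero hbd (zpow_ne_zero _ hxne)
  · intro j hj
    rw [norm_mul, norm_mul, norm_zpow, norm_zpow]
    have hSpos : 0 < ‖b d‖ := norm_pos_iff.mpr hbd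
    rcases lt_or_gt_of_ne hj with hlt | hgt
    · -- j < d : use the bottom condition at radius u
      have hw : ‖b j‖ * u ^ j < ‖b d‖ * u ^ d := hb.2 j hlt
      have hq : (1:ℝ) ≤ ‖x‖ / u := (one_le_div hu0).mpr hx1
      have hxu : ∀ k : ℤ, ‖x‖ ^ k = u ^ k * (‖x‖ / u) ^ k := by
        intro k
        rw [← mul_zpow]
        congr 1
        field_simp
      rw [hxu j, hxu d]
      calc ‖b j‖ * (u ^ j * (‖x‖ / u) ^ j)
          = ‖b j‖ * u ^ j * (‖x‖ / u) ^ j := by ring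
        _ ≤ ‖b j‖ * u ^ j * (‖x‖ / u) ^ d := by
            apply mul_le_mul_of_nonneg_left (zpow_le_zpow_right₀ hq hlt.le)
            exact mul_nonneg (norm_nonneg _) (zpow_pos hu0 _).le
        _ < ‖b d‖ * u ^ d * (‖x‖ / u) ^ d := by
            apply mul_lt_mul_of_pos_right hw
            exact zpow_pos (lt_of_lt_of_le one_pos hq) _
        _ = ‖b d‖ * (u ^ d * (‖x‖ / u) ^ d) := by ring
    · -- d < j : use the top condition at radius 1
      have hnlt : ‖b j‖ < ‖b d‖ := ht.2 j hgt
      calc ‖b j‖ * ‖x‖ ^ j ≤ ‖b j‖ * ‖x‖ ^ d := by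
            apply mul_le_mul_of_nonneg_left
              (zpow_le_zpow_right_of_le_one₀ hx0 hx2 hgt.le) (norm_nonneg _)
        _ < ‖b d‖ * ‖x‖ ^ d := mul_lt_mul_of_pos_right hnlt (zpow_pos hx0 _)

/-- positive-tail coefficients of the quotient by `(X - z)` -/
def Pser (b : ℤ → L) (z : L) (m : ℤ) (j : ℕ) : L := b (m + 1 + j) * z ^ j
/-- negative-tail coefficients of the quotient by `(X - z)` -/
def Nser (b : ℤ → L) (z : L) (m : ℤ) (j : ℕ) : L := b (m - j) * z⁻¹ ^ (j + 1)
/-- the quotient of `b` by `(X - z)` -/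
def bdiv (b : ℤ → L) (z : L) (m : ℤ) : L :=
  if 0 ≤ m then ∑' j : ℕ, Pser b z m j else -∑' j : ℕ, Nser b z m j

section Division

variable [CompleteSpace L] {u : ℝ} {b : ℤ → L} {z : L}

lemma division (hu0 : 0 < u) (hu1 : u < 1)
    (hb1 : Tendsto (fun i => ‖b i‖) cofinite (𝓝 0))
    (hb2 : Tendsto (fun i => ‖b i‖ * u ^ i) cofinite (𝓝 0))
    (hz1 : u ≤ ‖z‖) (hz2 : ‖z‖ ≤ 1)
    (hz : ∑' i : ℤ, b i * z ^ i = 0) :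
    Tendsto (fun i => ‖bdiv b z i‖) cofinite (𝓝 0) ∧
    Tendsto (fun i => ‖bdiv b z i‖ * u ^ i) cofinite (𝓝 0) ∧
    (∀ m : ℤ, bdiv b z (m - 1) - z * bdiv b z m = b m) ∧
    (∀ x : L, u ≤ ‖x‖ → ‖x‖ ≤ 1 →
      ∑' i : ℤ, b i * x ^ i = (x - z) * ∑' i : ℤ, bdiv b z i * x ^ i) := by
  have hz0 : (0:ℝ) < ‖z‖ := lt_of_lt_of_le hu0 hz1
  have hzne : z ≠ 0 := norm_pos_iff.mp hz0
  have hzinv : ‖z⁻¹‖ ≤ u⁻¹ := by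
    rw [norm_inv]
    exact inv_anti₀ hu0 hz1
  -- summability of the positive-tail series
  have hSP : ∀ m : ℤ, Summable (Pser b z m) := by
    intro m
    apply summable_of_norm_tendsto_cofinite
    have hinj : Function.Injective (fun j : ℕ => (m + 1 + j : ℤ)) := by
      intro a b h
      simpa using h
    have h1 : Tendsto (fun j : ℕ => ‖b (m + 1 + j)‖) cofinite (𝓝 0) :=
      hb1.comp (hinj.tendsto_cofinite)
    apply squeeze_zero (fun j => norm_nonneg _) _ h1
    intro j
    rw [Pser, norm_mul, norm_pow]
    calc ‖b (m + 1 + j)‖ * ‖z‖ ^ j ≤ ‖b (m + 1 + j)‖ * 1 :=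
          mul_le_mul_of_nonneg_left (pow_le_one₀ (norm_nonneg _) hz2) (norm_nonneg _)
      _ = ‖b (m + 1 + j)‖ := mul_one _
  -- key pointwise bound on the negative-tail series
  have hkeyN : ∀ (m : ℤ) (j : ℕ),
      ‖Nser b z m j‖ ≤ u ^ (-m - 1 : ℤ) * (‖b (m - j)‖ * u ^ (m - j : ℤ)) := by
    intro m j
    rw [Nser, norm_mul, norm_pow]
    have h1 : ‖z⁻¹‖ ^ (j + 1) ≤ u⁻¹ ^ (j + 1) :=
      pow_le_pow_left₀ (norm_nonneg _) hzinv _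
    calc ‖b (m - j)‖ * ‖z⁻¹‖ ^ (j + 1) ≤ ‖b (m - j)‖ * u⁻¹ ^ (j + 1) :=
          mul_le_mul_of_nonneg_left h1 (norm_nonneg _)
      _ = u ^ (-m - 1 : ℤ) * (‖b (m - j)‖ * u ^ (m - j : ℤ)) := by
          have e1 : (u⁻¹ : ℝ) ^ (j + 1) = u ^ (-(j + 1) : ℤ) := by
            rw [zpow_neg, inv_pow]
            norm_cast
          have e2 : u ^ (-m - 1 : ℤ) * u ^ (m - j : ℤ) = u ^ (-(j + 1) : ℤ) := by
            rw [← zpow_add₀ hu0.ne']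
            congr 1
            push_cast
            ring
          rw [e1, ← e2]
          ring
  -- summability of the negative-tail series
  have hSN : ∀ m : ℤ, Summable (Nser b z m) := by
    intro m
    apply summable_of_norm_tendsto_cofinite
    have hinj : Function.Injective (fun j : ℕ => (m - j : ℤ)) := by
      intro a b h
      simpa using h
    have h1 : Tendsto (fun j : ℕ => ‖b (m - j)‖ * u ^ (m - j : ℤ)) cofinite (𝓝 0) :=
      hb2.comp (hinj.tendsto_cofinite)
    have h2 : Tendsto (fun j : ℕ => u ^ (-m - 1 : ℤ) * (‖b (m - j)‖ * u ^ (m - j : ℤ)))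
        cofinite (𝓝 0) := by
      simpa using h1.const_mul (u ^ (-m - 1 : ℤ))
    exact squeeze_zero (fun j => norm_nonneg _) (hkeyN m) h2
  -- the recurrence
  have hrec : ∀ m : ℤ, bdiv b z (m - 1) - z * bdiv b z m = b m := by
    intro m
    rcases lt_trichotomy m 0 with hm | rfl | hm
    · -- m < 0
      rw [bdiv, bdiv, if_neg (by omega), if_neg (by omega)]
      have hsum : Summable fun j : ℕ => z * Nser b z m j := (hSN m).mul_left z
      have e0 : ∑' j : ℕ, z * Nser b z m j
          = z * Nser b z m 0 + ∑' j : ℕ, z * Nser b z m (j + 1) := Summable.tsum_eq_zero_add hsum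
      have e1 : z * Nser b z m 0 = b m := by
        rw [Nser]
        push_cast
        field_simp
        simp
      have e2 : ∀ j : ℕ, z * Nser b z m (j + 1) = Nser b z (m - 1) j := by
        intro j
        rw [Nser, Nser]
        have harg : (m - (j + 1 : ℕ) : ℤ) = m - 1 - j := by push_cast; ring
        rw [harg, pow_succ, pow_succ]
        field_simp
      rw [tsum_congr e2] at e0
      rw [tsum_mul_left, e1] at e0
      linear_combination e0
    · -- m = 0
      rw [bdiv, bdiv, if_neg (by omega), if_pos le_rfl]
      have hzsum : Summable fun i : ℤ => b i * z ^ i :=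
        summable_on_annulus hu0 hb1 hb2 hz1 hz2
      have hsplit : ∑' n : ℕ, ((fun i : ℤ => b i * z ^ i) n
          + (fun i : ℤ => b i * z ^ i) (-(n + 1))) = 0 := by
        rw [tsum_nat_add_neg_add_one hzsum, hz]
      have S1 : Summable fun n : ℕ => (fun i : ℤ => b i * z ^ i) n :=
        hzsum.comp_injective (by intro a b h; exact_mod_cast h : Function.Injective (Nat.cast : ℕ → ℤ))
      have S2 : Summable fun n : ℕ => (fun i : ℤ => b i * z ^ i) (-(n + 1)) :=
        hzsum.comp_injective (by intro a b h; simpa using h :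
          Function.Injective fun n : ℕ => (-(n + 1) : ℤ))
      rw [Summable.tsum_add S1 S2] at hsplit
      have E1 : ∑' n : ℕ, (fun i : ℤ => b i * z ^ i) n
          = b 0 + z * ∑' j : ℕ, Pser b z 0 j := by
        rw [Summable.tsum_eq_zero_add S1]
        simp only [Nat.cast_zero, zpow_zero, mul_one]
        congr 1
        rw [← tsum_mul_left]
        apply tsum_congr
        intro j
        rw [Pser]
        have harg : ((j + 1 : ℕ) : ℤ) = 0 + 1 + j := by push_cast; ring
        rw [harg]
        have hp : z ^ (0 + 1 + (j : ℤ)) = z * z ^ (j : ℕ) := by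
          rw [← zpow_natCast z j, mul_comm, ← zpow_add_one₀ hzne]
          congr 1
          ring
        rw [hp]
        ring
      have E2 : ∑' n : ℕ, (fun i : ℤ => b i * z ^ i) (-(n + 1))
          = ∑' j : ℕ, Nser b z (-1) j := by
        apply tsum_congr
        intro j
        simp only [Nser]
        have harg : (-(j + 1) : ℤ) = -1 - j := by push_cast; ring
        have hp : z ^ (-(j + 1) : ℤ) = z⁻¹ ^ (j + 1) := by
          rw [zpow_neg, ← inv_zpow, ← zpow_natCast z⁻¹ (j + 1)]
          norm_num
        rw [← harg, hp]
      rw [E1, E2] at hsplit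
      rw [show ((0:ℤ) - 1) = -1 from by norm_num]
      linear_combination -hsplit
    · -- 0 < m
      rw [bdiv, bdiv, if_pos (by omega), if_pos (by omega)]
      have e0 : ∑' j : ℕ, Pser b z (m - 1) j
          = Pser b z (m - 1) 0 + ∑' j : ℕ, Pser b z (m - 1) (j + 1) :=
        Summable.tsum_eq_zero_add (hSP (m - 1))
      have e1 : Pser b z (m - 1) 0 = b m := by
        rw [Pser]
        norm_num
      have e2 : ∀ j : ℕ, Pser b z (m - 1) (j + 1) = z * Pser b z m j := by
        intro j
        rw [Pser, Pser]
        have harg : (m - 1 + 1 + (j + 1 : ℕ) : ℤ) = m + 1 + j := by push_cast; ring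
        rw [harg, pow_succ]
        ring
      rw [tsum_congr e2, tsum_mul_left, e1] at e0
      rw [e0]
      ring
  -- uniform bounds on the quotient coefficients
  have hA : ∀ m : ℤ, 0 ≤ m → ∀ C : ℝ, 0 ≤ C → (∀ i : ℤ, m + 1 ≤ i → ‖b i‖ ≤ C) →
      ‖bdiv b z m‖ ≤ C := by
    intro m hm C hC hball
    rw [bdiv, if_pos hm]
    apply norm_tsum_le_of_le hC
    intro j
    rw [Pser, norm_mul, norm_pow]
    calc ‖b (m + 1 + j)‖ * ‖z‖ ^ j ≤ C * 1 :=
          mul_le_mul (hball _ (by omega)) (pow_le_one₀ (norm_nonneg _) hz2)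
            (pow_nonneg (norm_nonneg _) _) hC
      _ = C := mul_one _
  have hB : ∀ m : ℤ, m < 0 → ∀ C : ℝ, 0 ≤ C → (∀ i : ℤ, i ≤ m → ‖b i‖ * u ^ i ≤ C) →
      ‖bdiv b z m‖ ≤ u ^ (-m - 1 : ℤ) * C := by
    intro m hm C hC hball
    rw [bdiv, if_neg (by omega), norm_neg]
    apply norm_tsum_le_of_le (mul_nonneg (zpow_pos hu0 _).le hC)
    intro j
    refine (hkeyN m j).trans ?_
    exact mul_le_mul_of_nonneg_left (hball _ (by omega)) (zpow_pos hu0 _).le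
  -- decay of the quotient coefficients
  have hb1T : Tendsto (fun i : ℤ => ‖b i‖) atTop (𝓝 0) :=
    hb1.mono_left (by rw [Int.cofinite_eq]; exact le_sup_right)
  have hb2B : Tendsto (fun i : ℤ => ‖b i‖ * u ^ i) atBot (𝓝 0) :=
    hb2.mono_left (by rw [Int.cofinite_eq]; exact le_sup_left)
  have tend_aux : ∀ (Fl : Filter ℤ) (G : ℤ → ℝ), (∀ m, 0 ≤ G m) →
      (∀ ε : ℝ, 0 < ε → ∀ᶠ m in Fl, G m ≤ ε / 2) → Tendsto G Fl (𝓝 0) := by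
    intro Fl G hnng h
    rw [Metric.tendsto_nhds]
    intro ε hε
    filter_upwards [h ε hε] with m hm
    rw [Real.dist_0_eq_abs, abs_of_nonneg (hnng m)]
    linarith
  -- eventual bounds at the two ends
  have hevB : ∀ ε : ℝ, 0 < ε → ∀ᶠ m : ℤ in atBot,
      ‖bdiv b z m‖ ≤ u ^ (-m - 1 : ℤ) * (ε * u / 2) := by
    intro ε hε
    have hε' : (0:ℝ) < ε * u / 2 := by positivity
    have h1 : ∀ᶠ i : ℤ in atBot, ‖b i‖ * u ^ i ≤ ε * u / 2 := by
      filter_upwards [Metric.tendsto_nhds.mp hb2B _ hε'] with i hi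
      rw [Real.dist_0_eq_abs] at hi
      calc ‖b i‖ * u ^ i ≤ |‖b i‖ * u ^ i| := le_abs_self _
        _ ≤ ε * u / 2 := hi.le
    obtain ⟨M, hM⟩ := eventually_atBot.mp h1
    rw [eventually_atBot]
    refine ⟨min M (-1), fun m hm => ?_⟩
    have hm1 : m < 0 := by
      have := min_le_right M (-1); omega
    exact hB m hm1 (ε * u / 2) hε'.le
      (fun i hi => hM i (le_trans hi (le_trans hm (min_le_left _ _))))
  have hevT : ∀ ε : ℝ, 0 < ε → ∀ᶠ m : ℤ in atTop, ‖bdiv b z m‖ ≤ ε / 2 := by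
    intro ε hε
    have hε' : (0:ℝ) < ε / 2 := by positivity
    have h1 : ∀ᶠ i : ℤ in atTop, ‖b i‖ ≤ ε / 2 := by
      filter_upwards [Metric.tendsto_nhds.mp hb1T _ hε'] with i hi
      rw [Real.dist_0_eq_abs] at hi
      calc ‖b i‖ ≤ |‖b i‖| := le_abs_self _
        _ ≤ ε / 2 := hi.le
    obtain ⟨M, hM⟩ := eventually_atTop.mp h1
    rw [eventually_atTop]
    refine ⟨max M 0, fun m hm => ?_⟩
    have hm0 : 0 ≤ m := le_trans (le_max_right M 0) hm
    exact hA m hm0 (ε / 2) hε'.le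
      (fun i hi => hM i (by have := le_max_left M 0; omega))
  have C1' : Tendsto (fun m : ℤ => ‖bdiv b z m‖) cofinite (𝓝 0) := by
    rw [Int.cofinite_eq, tendsto_sup]
    constructor
    · apply tend_aux _ _ (fun m => norm_nonneg _)
      intro ε hε
      have hε' : (0:ℝ) ≤ ε * u / 2 := by positivity
      filter_upwards [hevB ε hε, eventually_lt_atBot (0:ℤ)] with m hm hm0
      calc ‖bdiv b z m‖ ≤ u ^ (-m - 1 : ℤ) * (ε * u / 2) := hm
        _ ≤ 1 * (ε * u / 2) :=
            mul_le_mul_of_nonneg_right (zpow_le_one₀ hu0 hu1.le (by omega)) hε'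
        _ = ε * u / 2 := one_mul _
        _ ≤ ε / 2 := by nlinarith
    · exact tend_aux _ _ (fun m => norm_nonneg _) hevT
  have C2' : Tendsto (fun m : ℤ => ‖bdiv b z m‖ * u ^ m) cofinite (𝓝 0) := by
    rw [Int.cofinite_eq, tendsto_sup]
    have hnng : ∀ m : ℤ, 0 ≤ ‖bdiv b z m‖ * u ^ m :=
      fun m => mul_nonneg (norm_nonneg _) (zpow_pos hu0 _).le
    constructor
    · apply tend_aux _ _ hnng
      intro ε hε
      filter_upwards [hevB ε hε] with m hm
      have e1 : (u:ℝ) ^ (-m - 1 : ℤ) * u ^ m = u⁻¹ := by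
        rw [← zpow_add₀ hu0.ne']
        have : (-m - 1 + m : ℤ) = -1 := by ring
        rw [this, zpow_neg_one]
      calc ‖bdiv b z m‖ * u ^ m
          ≤ u ^ (-m - 1 : ℤ) * (ε * u / 2) * u ^ m :=
            mul_le_mul_of_nonneg_right hm (zpow_pos hu0 _).le
        _ = (u ^ (-m - 1 : ℤ) * u ^ m) * (ε * u / 2) := by ring
        _ = u⁻¹ * (ε * u / 2) := by rw [e1]
        _ = ε / 2 := by field_simp
    · apply tend_aux _ _ hnng
      intro ε hε
      filter_upwards [hevT ε hε, eventually_ge_atTop (0:ℤ)] with m hm hm0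
      calc ‖bdiv b z m‖ * u ^ m ≤ ‖bdiv b z m‖ * 1 :=
            mul_le_mul_of_nonneg_left (zpow_le_one₀ hu0 hu1.le hm0) (norm_nonneg _)
        _ = ‖bdiv b z m‖ := mul_one _
        _ ≤ ε / 2 := hm
  have hfun : ∀ x : L, u ≤ ‖x‖ → ‖x‖ ≤ 1 →
      ∑' i : ℤ, b i * x ^ i = (x - z) * ∑' i : ℤ, bdiv b z i * x ^ i := by
    intro x hx1 hx2
    have hx0 : (0:ℝ) < ‖x‖ := lt_of_lt_of_le hu0 hx1
    have hxne : x ≠ 0 := norm_pos_iff.mp hx0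
    have hsx' : Summable fun i : ℤ => bdiv b z i * x ^ i :=
      summable_on_annulus hu0 C1' C2' hx1 hx2
    have Sshift : Summable fun i : ℤ => bdiv b z (i - 1) * x ^ i := by
      have h1 : Summable fun i : ℤ => bdiv b z i * x ^ i * x := hsx'.mul_right x
      have h2 := h1.comp_injective
        (by intro a b h
            have h' : a - 1 = b - 1 := h
            omega : Function.Injective fun k : ℤ => k - 1)
      apply h2.congr
      intro k
      simp only [Function.comp_apply]
      rw [mul_assoc, ← zpow_add_one₀ hxne, sub_add_cancel]
    have Eshift : ∑' i : ℤ, bdiv b z (i - 1) * x ^ i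
        = x * ∑' i : ℤ, bdiv b z i * x ^ i := by
      have e1 : ∀ i : ℤ, bdiv b z (i - 1) * x ^ i
          = (fun k : ℤ => bdiv b z k * x ^ (k + 1)) ((Equiv.subRight (1:ℤ)) i) := by
        intro i
        simp only [Equiv.subRight_apply]
        rw [sub_add_cancel]
      rw [tsum_congr e1,
        Equiv.tsum_eq (Equiv.subRight (1:ℤ)) (fun k => bdiv b z k * x ^ (k + 1)),
        ← tsum_mul_left]
      apply tsum_congr
      intro k
      rw [zpow_add_one₀ hxne]
      ring
    calc ∑' i : ℤ, b i * x ^ i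
        = ∑' i : ℤ, (bdiv b z (i - 1) - z * bdiv b z i) * x ^ i :=
          tsum_congr fun i => by rw [← hrec i]
      _ = ∑' i : ℤ, (bdiv b z (i - 1) * x ^ i - z * (bdiv b z i * x ^ i)) :=
          tsum_congr fun i => by ring
      _ = (∑' i : ℤ, bdiv b z (i - 1) * x ^ i) - ∑' i : ℤ, z * (bdiv b z i * x ^ i) :=
          Summable.tsum_sub Sshift (hsx'.mul_left z)
      _ = x * (∑' i : ℤ, bdiv b z i * x ^ i) - z * ∑' i : ℤ, bdiv b z i * x ^ i := by
          rw [Eshift, tsum_mul_left]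
      _ = (x - z) * ∑' i : ℤ, bdiv b z i * x ^ i := by ring
  exact ⟨C1', C2', hrec, hfun⟩

end Division

/-- helper: tendsto zero from eventual epsilon bounds -/
lemma tendsto_zero_of_eventually_lt {α : Type*} {Fl : Filter α} {G : α → ℝ}
    (hnng : ∀ m, 0 ≤ G m) (h : ∀ ε : ℝ, 0 < ε → ∀ᶠ m in Fl, G m < ε) :
    Tendsto G Fl (𝓝 0) := by
  rw [Metric.tendsto_nhds]
  intro ε hε
  filter_upwards [h ε hε] with m hm
  rwa [Real.dist_0_eq_abs, abs_of_nonneg (hnng m)]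

/-- the main induction: a nonzero convergent Laurent series on the closed annulus
`u ≤ ‖x‖ ≤ 1` whose Newton-polygon width is at most `n` has finitely many zeros. -/
lemma main_induction {L : Type*} [NormedField L] [IsUltrametricDist L] [CompleteSpace L]
    {u : ℝ} (hu0 : 0 < u) (hu1 : u < 1) :
    ∀ (n : ℕ) (b : ℤ → L), Tendsto (fun i => ‖b i‖) cofinite (𝓝 0) →
    Tendsto (fun i => ‖b i‖ * u ^ i) cofinite (𝓝 0) →
    (∃ i, b i ≠ 0) →
    (∀ i0 j0 : ℤ, TopDom (fun i => ‖b i‖) i0 → BotDom (fun i => ‖b i‖ * u ^ i) j0 →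
      (i0 - j0).toNat ≤ n) →
    {x : L | u ≤ ‖x‖ ∧ ‖x‖ ≤ 1 ∧ ∑' i : ℤ, b i * x ^ i = 0}.Finite := by
  intro n
  induction n with
  | zero =>
    intro b hb1 hb2 hne hW
    obtain ⟨iw, hiw⟩ := hne
    have hpos1 : 0 < ‖b iw‖ := norm_pos_iff.mpr hiw
    have hpos2 : 0 < ‖b iw‖ * u ^ iw := mul_pos hpos1 (zpow_pos hu0 _)
    obtain ⟨i0, hi0⟩ := exists_topDom hb1 hpos1
    obtain ⟨j0, hj0⟩ := exists_botDom hb2 hpos2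
    have hji : j0 ≤ i0 := botDom_le_topDom hu0 hu1 (fun i => norm_nonneg _) hi0 hj0
      (lt_of_lt_of_le hpos1 (hi0.1 iw))
    have heq : i0 = j0 := by
      have := hW i0 j0 hi0 hj0
      omega
    have hbd : b i0 ≠ 0 := norm_pos_iff.mp (lt_of_lt_of_le hpos1 (hi0.1 iw))
    apply Set.Finite.subset (Set.finite_empty)
    intro x hx
    exfalso
    exact no_zero_of_eq_dom hu0 hi0 (heq ▸ hj0) hbd hx.1 hx.2.1
      (summable_on_annulus hu0 hb1 hb2 hx.1 hx.2.1) hx.2.2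
  | succ n IH =>
    intro b hb1 hb2 hne hW
    rcases Set.eq_empty_or_nonempty
      {x : L | u ≤ ‖x‖ ∧ ‖x‖ ≤ 1 ∧ ∑' i : ℤ, b i * x ^ i = 0} with he | ⟨z, hz⟩
    · rw [he]; exact Set.finite_empty
    · obtain ⟨hz1, hz2, hzs⟩ := hz
      obtain ⟨C1', C2', hrec, hfun⟩ := division hu0 hu1 hb1 hb2 hz1 hz2 hzs
      have hne' : ∃ i, bdiv b z i ≠ 0 := by
        by_contra hc
        push_neg at hc
        obtain ⟨i, hi⟩ := hne
        apply hi
        rw [← hrec i, hc, hc, mul_zero, sub_zero]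
      have hW' : ∀ i0 j0 : ℤ, TopDom (fun i => ‖bdiv b z i‖) i0 →
          BotDom (fun i => ‖bdiv b z i‖ * u ^ i) j0 → (i0 - j0).toNat ≤ n := by
        intro i0 j0 ht hbb
        have ht2 : TopDom (fun i => ‖b i‖) (i0 + 1) := by
          have h := topDom_step hz2 ht
          have hfeq : (fun i : ℤ => ‖bdiv b z (i - 1) - z * bdiv b z i‖)
              = fun i : ℤ => ‖b i‖ := by
            funext i; rw [hrec i]
          rwa [hfeq] at h
        have hb2' : BotDom (fun i => ‖b i‖ * u ^ i) j0 := by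
          have h := botDom_step hu0 hz1 hbb
          have hfeq : (fun i : ℤ => ‖bdiv b z (i - 1) - z * bdiv b z i‖ * u ^ i)
              = fun i : ℤ => ‖b i‖ * u ^ i := by
            funext i; rw [hrec i]
          rwa [hfeq] at h
        have := hW (i0 + 1) j0 ht2 hb2'
        omega
      have hfin' := IH (bdiv b z) C1' C2' hne' hW'
      apply Set.Finite.subset (hfin'.insert z)
      intro x hx
      obtain ⟨hx1, hx2, hxs⟩ := hx
      by_cases hxz : x = z
      · exact Set.mem_insert_iff.mpr (Or.inl hxz)
      · refine Set.mem_insert_iff.mpr (Or.inr ⟨hx1, hx2, ?_⟩)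
        have h := hfun x hx1 hx2
        rw [hxs] at h
        rcases mul_eq_zero.mp h.symm with h' | h'
        · exact absurd (sub_eq_zero.mp h') hxz
        · exact h'

end AnnulusProof

open Filter Topology AnnulusProof in
/-- a nonzero bounded analytic function on a closed annulus has only finitely
many zeros.  Let `f = Σ_{i∈ℤ} a_i X^i` be a nonzero element of `R{X,Y}/(XY − π^e)` written as
a Laurent series (so `π^{ei} ∣ a_{−i}` and the coefficients tend to 0 π-adically), and let `L`
be a complete ultrametric valued extension field (e.g. an algebraic closure of `K`).  Then the
set of zeros of `f` in the annulus `|π|^e ≤ |x| ≤ 1` of `L` is finite. -/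
theorem finitely_many_zeros_on_closed_annulus
    (R : Type*) [CommRing R] [IsDomain R] [IsDiscreteValuationRing R]
    (π : R) (hπ : Irreducible π) [IsAdicComplete (Ideal.span {π}) R]
    (e : ℕ) (he : 0 < e)
    (a : ℤ → R) (hne : ∃ i : ℤ, a i ≠ 0)
    -- the Laurent series condition `ord_π(a_{−i}) ≥ e·i`
    (hadm : ∀ i : ℕ, π ^ (e * i) ∣ a (-(i : ℤ)))
    -- the coefficients tend to 0 π-adically (restrictedness)
    (hd1 : ∀ n : ℕ, {i : ℤ | ¬ π ^ n ∣ a i}.Finite)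
    (hd2 : ∀ n : ℕ, {i : ℕ | ¬ π ^ (e * i + n) ∣ a (-(i : ℤ))}.Finite)
    -- a complete ultrametric algebraically closed valued extension field
    (L : Type*) [NormedField L] [CompleteSpace L] [IsUltrametricDist L] [IsAlgClosed L]
    (φ : R →+* L)
    (hφ : ∀ r : R, ‖φ r‖ ≤ 1) (hφπ : ‖φ π‖ < 1) (hφπ0 : φ π ≠ 0)
    -- the series converges on the closed annulus
    (hsum : ∀ x : L, ‖φ π‖ ^ e ≤ ‖x‖ → ‖x‖ ≤ 1 →
      Summable fun i : ℤ => φ (a i) * x ^ i) :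
    {x : L | ‖φ π‖ ^ e ≤ ‖x‖ ∧ ‖x‖ ≤ 1 ∧ ∑' i : ℤ, φ (a i) * x ^ i = 0}.Finite := by
  classical
  have hc0 : 0 < ‖φ π‖ := norm_pos_iff.mpr hφπ0
  set c : ℝ := ‖φ π‖ with hc
  set u : ℝ := c ^ e with hudef
  have hu0 : 0 < u := pow_pos hc0 e
  have hu1 : u < 1 := pow_lt_one₀ hc0.le hφπ he.ne'
  set b : ℤ → L := fun i => φ (a i) with hbdef
  have hnorm : ∀ (n : ℕ) (r : R), π ^ n ∣ r → ‖φ r‖ ≤ c ^ n := by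
    rintro n r ⟨s, rfl⟩
    rw [map_mul, map_pow, norm_mul, norm_pow]
    calc c ^ n * ‖φ s‖ ≤ c ^ n * 1 :=
          mul_le_mul_of_nonneg_left (hφ s) (pow_nonneg hc0.le n)
      _ = c ^ n := mul_one _
  have hb1 : Tendsto (fun i : ℤ => ‖b i‖) cofinite (𝓝 0) := by
    apply tendsto_zero_of_eventually_lt (fun m => norm_nonneg _)
    intro ε hε
    obtain ⟨n, hn⟩ := exists_pow_lt_of_lt_one hε hφπ
    rw [eventually_cofinite]
    apply Set.Finite.subset (hd1 n)
    intro i hi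
    simp only [Set.mem_setOf_eq, not_lt] at hi
    simp only [Set.mem_setOf_eq]
    intro hdvd
    have h1 : ‖b i‖ ≤ c ^ n := hnorm n (a i) hdvd
    linarith [lt_of_le_of_lt h1 hn]
  have hb2 : Tendsto (fun i : ℤ => ‖b i‖ * u ^ i) cofinite (𝓝 0) := by
    apply tendsto_zero_of_eventually_lt
      (fun m => mul_nonneg (norm_nonneg _) (zpow_pos hu0 _).le)
    intro ε hε
    obtain ⟨n, hn⟩ := exists_pow_lt_of_lt_one hε hφπ
    rw [eventually_cofinite]
    apply Set.Finite.subset ((hd1 n).union ((hd2 n).image (fun k : ℕ => -(k : ℤ))))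
    intro i hi
    simp only [Set.mem_setOf_eq, not_lt] at hi
    rcases le_or_gt 0 i with hip | hin
    · -- nonnegative index : use hd1
      apply Set.mem_union_left
      simp only [Set.mem_setOf_eq]
      intro hdvd
      have h1 : ‖b i‖ ≤ c ^ n := hnorm n (a i) hdvd
      have h2 : (u : ℝ) ^ i ≤ 1 := zpow_le_one₀ hu0 hu1.le hip
      have h3 : ‖b i‖ * u ^ i ≤ c ^ n * 1 :=
        mul_le_mul h1 h2 (zpow_pos hu0 _).le (pow_nonneg hc0.le n)
      rw [mul_one] at h3
      linarith [lt_of_le_of_lt h3 hn]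
    · -- negative index : use hd2
      apply Set.mem_union_right
      set k : ℕ := (-i).toNat with hk
      have hik : i = -(k : ℤ) := by omega
      refine ⟨k, ?_, hik.symm⟩
      simp only [Set.mem_setOf_eq]
      intro hdvd
      have h1 : ‖b i‖ ≤ c ^ (e * k + n) := by
        rw [hbdef]
        simp only
        rw [hik]
        exact hnorm _ _ hdvd
      have h2 : (u : ℝ) ^ i = (c ^ (e * k))⁻¹ := by
        rw [hudef, hik, zpow_neg, zpow_natCast, ← pow_mul]
      have hposk : (0:ℝ) < c ^ (e * k) := pow_pos hc0 _
      have h3 : ‖b i‖ * u ^ i ≤ c ^ n := by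
        rw [h2]
        calc ‖b i‖ * (c ^ (e * k))⁻¹ ≤ c ^ (e * k + n) * (c ^ (e * k))⁻¹ :=
              mul_le_mul_of_nonneg_right h1 (inv_nonneg.mpr hposk.le)
          _ = c ^ n := by
              rw [pow_add]
              field_simp
      linarith [lt_of_le_of_lt h3 hn]
  have hne' : ∃ i : ℤ, b i ≠ 0 := by
    obtain ⟨i, hi⟩ := hne
    obtain ⟨n, un, hun⟩ := IsDiscreteValuationRing.eq_unit_mul_pow_irreducible hi hπ
    refine ⟨i, ?_⟩
    rw [hbdef]
    simp only
    rw [hun, map_mul, map_pow]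
    exact mul_ne_zero ((un.isUnit.map φ).ne_zero) (pow_ne_zero _ hφπ0)
  obtain ⟨iw, hiw⟩ := hne'
  have hpos1 : 0 < ‖b iw‖ := norm_pos_iff.mpr hiw
  have hpos2 : 0 < ‖b iw‖ * u ^ iw := mul_pos hpos1 (zpow_pos hu0 _)
  obtain ⟨i0, hi0⟩ := exists_topDom hb1 hpos1
  obtain ⟨j0, hj0⟩ := exists_botDom hb2 hpos2
  exact main_induction hu0 hu1 ((i0 - j0).toNat) b hb1 hb2 ⟨iw, hiw⟩
    (fun i0' j0' ht hb' => by
      rw [topDom_unique ht hi0, botDom_unique hb' hj0])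
end
end

section
/- Multiplicativity of the boundary valuation: let R be a complete DVR with uniformizer π, e > 0, and A = R{X,Y}/(XY − π^e). For f = Σ_{i∈ℤ} a_i X^i ∈ A nonzero define η_X(f) = min_i ord_π(a_i) and v_X(f) = min{i : ord_π(a_i) = η_X(f)}. Then for all nonzero f, g ∈ A: η_X(fg) = η_X(f) + η_X(g) and v_X(fg) = v_X(f) + v_X(g); i.e. f ↦ (η_X(f), v_X(f)) ∈ ℤ≥0 × ℤ (lexicographically ordered) is a rank-2 valuation on A. -/
noncomputable section

/-- `EtaV π a η v` expresses that for the Laurent series with coefficients `a : ℤ → R` one has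
`η_X(a) = η` and `v_X(a) = v`: all coefficients are divisible by `π^η`, the coefficient `a_v`
is not divisible by `π^{η+1}`, and all coefficients of index `< v` are divisible by
`π^{η+1}`. -/
def EtaV {R : Type*} [CommRing R] (π : R) (a : ℤ → R) (η : ℕ) (v : ℤ) : Prop :=
  (∀ i : ℤ, π ^ η ∣ a i) ∧ ¬ π ^ (η + 1) ∣ a v ∧ ∀ i : ℤ, i < v → π ^ (η + 1) ∣ a i

/-- multiplicativity of the boundary valuation on the closed annulus ring.  If
`f, g` are nonzero elements of `R{X,Y}/(XY − π^e)` written as Laurent series with coefficients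
`a, b : ℤ → R`, with product `c` (`c_i = Σ_j a_j·b_{i−j}`, a convergent sum in the complete
DVR `R`), then `η_X(fg) = η_X(f) + η_X(g)` and `v_X(fg) = v_X(f) + v_X(g)`; i.e.
`f ↦ (η_X(f), v_X(f))` is a rank-2 valuation. -/
theorem boundary_valuation_multiplicative
    (R : Type*) [CommRing R] [IsDomain R] [IsDiscreteValuationRing R]
    [TopologicalSpace R] [IsTopologicalRing R] [T2Space R]
    (π : R) (hπ : Irreducible π) (e : ℕ) (he : 0 < e)
    -- ideals of `R` are closed (as holds for the π-adic topology on a complete DVR)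
    (hclosed : ∀ n : ℕ, IsClosed ((Ideal.span {π ^ n} : Ideal R) : Set R))
    (a b c : ℤ → R)
    -- Laurent series conditions `ord_π(a_{−i}) ≥ e·i`
    (hadma : ∀ i : ℕ, π ^ (e * i) ∣ a (-(i : ℤ)))
    (hadmb : ∀ i : ℕ, π ^ (e * i) ∣ b (-(i : ℤ)))
    -- coefficients tend to 0 π-adically
    (hda : ∀ n : ℕ, {i : ℤ | ¬ π ^ n ∣ a i}.Finite)
    (hdb : ∀ n : ℕ, {i : ℤ | ¬ π ^ n ∣ b i}.Finite)
    -- `c` is the Laurent series of the product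
    (hmul : ∀ i : ℤ, HasSum (fun j : ℤ => a j * b (i - j)) (c i))
    (η₁ η₂ : ℕ) (v₁ v₂ : ℤ)
    (hab : EtaV π a η₁ v₁) (hbb : EtaV π b η₂ v₂) :
    EtaV π c (η₁ + η₂) (v₁ + v₂) := by
  obtain ⟨ha1, ha2, ha3⟩ := hab
  obtain ⟨hb1, hb2, hb3⟩ := hbb
  have hdvd_sum : ∀ (n : ℕ) (f : ℤ → R) (s : R), HasSum f s →
      (∀ j, π ^ n ∣ f j) → π ^ n ∣ s := by
    intro n f s hs hf
    have hmem : s ∈ (Ideal.span {π ^ n} : Ideal R) := by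
      refine (hclosed n).mem_of_tendsto hs (Filter.Eventually.of_forall ?_)
      intro t
      exact Ideal.sum_mem _ fun j _ => Ideal.mem_span_singleton.2 (hf j)
    exact Ideal.mem_span_singleton.1 hmem
  refine ⟨?_, ?_, ?_⟩
  · intro i
    refine hdvd_sum _ _ _ (hmul i) fun j => ?_
    rw [pow_add]
    exact mul_dvd_mul (ha1 j) (hb1 _)
  · obtain ⟨u, hu⟩ := ha1 v₁
    obtain ⟨w, hw⟩ := hb1 v₂
    have hu' : ¬ π ∣ u := by
      rintro ⟨t, rfl⟩
      exact ha2 ⟨t, by rw [hu]; ring⟩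
    have hw' : ¬ π ∣ w := by
      rintro ⟨t, rfl⟩
      exact hb2 ⟨t, by rw [hw]; ring⟩
    intro hdvd
    have hupd : HasSum (Function.update (fun j => a j * b (v₁ + v₂ - j)) v₁ 0)
        (0 - a v₁ * b (v₁ + v₂ - v₁) + c (v₁ + v₂)) := (hmul (v₁ + v₂)).update v₁ 0
    have key : π ^ (η₁ + η₂ + 1) ∣ (0 - a v₁ * b (v₁ + v₂ - v₁) + c (v₁ + v₂)) := by
      refine hdvd_sum _ _ _ hupd fun j => ?_
      by_cases hj : j = v₁
      · subst hj; rw [Function.update_self]; exact dvd_zero _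
      · rw [Function.update_of_ne hj]
        rcases lt_or_gt_of_ne hj with h | h
        · have : π ^ (η₁ + 1 + η₂) ∣ a j * b (v₁ + v₂ - j) := by
            rw [pow_add]; exact mul_dvd_mul (ha3 j h) (hb1 _)
          convert this using 2 <;> omega
        · have hlt : v₁ + v₂ - j < v₂ := by omega
          have : π ^ (η₁ + (η₂ + 1)) ∣ a j * b (v₁ + v₂ - j) := by
            rw [pow_add]; exact mul_dvd_mul (ha1 j) (hb3 _ hlt)
          convert this using 2 <;> omega
    have hmain : π ^ (η₁ + η₂ + 1) ∣ a v₁ * b (v₁ + v₂ - v₁) := by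
      have := dvd_sub hdvd key
      have h2 : c (v₁ + v₂) - (0 - a v₁ * b (v₁ + v₂ - v₁) + c (v₁ + v₂))
          = a v₁ * b (v₁ + v₂ - v₁) := by ring
      rwa [h2] at this
    have hb2' : (v₁ + v₂ - v₁ : ℤ) = v₂ := by ring
    rw [hb2'] at hmain
    obtain ⟨t, ht⟩ := hmain
    have heq : π ^ (η₁ + η₂) * (u * w) = π ^ (η₁ + η₂) * (π * t) := by
      have : a v₁ * b v₂ = π ^ (η₁ + η₂) * (u * w) := by rw [hu, hw, pow_add]; ring
      rw [← this, ht, pow_succ]; ring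
    have huw : u * w = π * t :=
      mul_left_cancel₀ (pow_ne_zero _ hπ.ne_zero) heq
    rcases hπ.prime.2.2 u w ⟨t, huw⟩ with h | h
    · exact hu' h
    · exact hw' h
  · intro i hi
    refine hdvd_sum _ _ _ (hmul i) fun j => ?_
    by_cases hj : j < v₁
    · have : π ^ (η₁ + 1 + η₂) ∣ a j * b (i - j) := by
        rw [pow_add]; exact mul_dvd_mul (ha3 j hj) (hb1 _)
      convert this using 2 <;> omega
    · have hlt : i - j < v₂ := by omega
      have : π ^ (η₁ + (η₂ + 1)) ∣ a j * b (i - j) := by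
        rw [pow_add]; exact mul_dvd_mul (ha1 j) (hb3 _ hlt)
      convert this using 2 <;> omega
end
end
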